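/- arXiv:1301.1239 — 6 statements merged into one kernel-verified Lean document; each statement's English description precedes it below -/
import Mathlib

section
/- Let V be a linear subspace of 𝔽_q^n of codimension k, and let X ∈ 𝔽_q^n be a random vector with independent identically distributed entries, each of whose distribution satisfies sup_{t ∈ 𝔽_q} P(ξ = t) ≤ 1 − α for some 0 < α < 1. Then P(X ∈ V) ≤ (1 − α)^k. -/
open Finset Module

/-- Auxiliary: a subspace `V` admits a set `S` of at most `finrank V` coordinates that
separates points of `V`. -/
theorem aux_exists_sep {F : Type*} [Field F] [Fintype F] [DecidableEq F] {n : ℕ}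
    (V : Submodule F (Fin n → F)) :
    ∃ S : Finset (Fin n), S.card ≤ Module.finrank F V ∧
      ∀ v ∈ V, (∀ i ∈ S, v i = 0) → v = 0 := by
  classical
  set f : Fin n → Module.Dual F V := fun i => (LinearMap.proj i).comp V.subtype with hf
  have hspan : Submodule.span F (Set.range f) = ⊤ := by
    rw [Submodule.eq_top_iff']
    intro φ
    obtain ⟨ψ, hψ⟩ := Subspace.dualRestrict_surjective (W := V) φ
    have hφ : φ = ∑ i, ψ (Pi.single i 1) • f i := by
      ext v
      have hv : (v : Fin n → F) = ∑ i, Pi.single i ((v : Fin n → F) i) :=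
        (Finset.univ_sum_single _).symm
      have hsingle : ∀ i, Pi.single i ((v : Fin n → F) i) =
          ((v : Fin n → F) i) • (Pi.single i (1 : F) : Fin n → F) := by
        intro i; funext j
        by_cases h : j = i <;> simp [Pi.single_apply, h]
      calc φ v = ψ (v : Fin n → F) := by rw [← hψ]; rfl
        _ = ψ (∑ i, ((v : Fin n → F) i) • (Pi.single i (1 : F) : Fin n → F)) := by
              rw [← Finset.sum_congr rfl fun i _ => hsingle i, ← hv]
        _ = ∑ i, ((v : Fin n → F) i) * ψ ((Pi.single i (1 : F) : Fin n → F)) := by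
              rw [map_sum]; exact Finset.sum_congr rfl fun i _ => by
                rw [map_smul]; rfl
        _ = (∑ i, ψ (Pi.single i 1) • f i) v := by
              simp [hf, mul_comm]
    rw [hφ]
    exact Submodule.sum_mem _ fun i _ =>
      Submodule.smul_mem _ _ (Submodule.subset_span ⟨i, rfl⟩)
  obtain ⟨b, hbsub, hbspan, hbind⟩ := exists_linearIndependent F (Set.range f)
  rw [hspan] at hbspan
  have hbfin : b.Finite := (Set.finite_range f).subset hbsub
  letI := hbfin.fintype
  have hbcard : hbfin.toFinset.card ≤ Module.finrank F V := by
    have h1 : Module.finrank F (Submodule.span F b) = b.toFinset.card :=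
      finrank_span_set_eq_card hbind
    have h2 : b.toFinset = hbfin.toFinset := by ext x; simp
    rw [hbspan, finrank_top, Subspace.dual_finrank_eq, h2] at h1
    exact h1.ge
  -- choose an index for each element of b
  refine ⟨hbfin.toFinset.attach.image (fun φ => (hbsub (hbfin.mem_toFinset.mp φ.2)).choose),
    le_trans (Finset.card_image_le.trans (by simp)) hbcard, ?_⟩
  intro v hv hvz
  have hall : ∀ φ : Module.Dual F V, φ ⟨v, hv⟩ = 0 := by
    intro φ
    have hφtop : φ ∈ Submodule.span F b := by rw [hbspan]; trivial
    induction hφtop using Submodule.span_induction with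
    | mem ψ hψ =>
        have hψ' : ψ ∈ hbfin.toFinset := by simpa using hψ
        have hspec : f ((hbsub (hbfin.mem_toFinset.mp
            (⟨ψ, hψ'⟩ : {x // x ∈ hbfin.toFinset}).2)).choose) = ψ :=
          (hbsub (hbfin.mem_toFinset.mp (⟨ψ, hψ'⟩ : {x // x ∈ hbfin.toFinset}).2)).choose_spec
        have hmem : (hbsub (hbfin.mem_toFinset.mp (⟨ψ, hψ'⟩ : {x // x ∈ hbfin.toFinset}).2)).choose ∈
            hbfin.toFinset.attach.image (fun φ => (hbsub (hbfin.mem_toFinset.mp φ.2)).choose) :=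
          Finset.mem_image.mpr ⟨⟨ψ, hψ'⟩, Finset.mem_attach _ _, rfl⟩
        have hz := hvz _ hmem
        rw [← hspec]
        simpa [hf] using hz
    | zero => simp
    | add x y _ _ hx hy => simp [hx, hy]
    | smul c x _ hx => simp [hx]
  have : (⟨v, hv⟩ : V) = 0 := (Module.forall_dual_apply_eq_zero_iff F _).mp hall
  simpa [Subtype.ext_iff] using this

/-- **Odlyzko's lemma.** If `V` is a subspace of `𝔽_q^n` of codimension `k` and `X` is a
random vector with iid entries of min-entropy `α`, then `P(X ∈ V) ≤ (1 - α)^k`. -/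
theorem stmt_0 {F : Type*} [Field F] [Fintype F] [DecidableEq F]
    (n k : ℕ) (V : Submodule F (Fin n → F))
    (hV : Module.finrank F V = n - k) (hkn : k ≤ n)
    (α : ℝ) (hα0 : 0 < α) (hα1 : α < 1)
    (μ : F → ℝ) (hμ0 : ∀ t, 0 ≤ μ t) (hμ1 : ∑ t, μ t = 1)
    (hent : ∀ t, μ t ≤ 1 - α) :
    ∑ x : Fin n → F, Set.indicator (V : Set (Fin n → F)) (fun _ => (1 : ℝ)) x
        * ∏ i, μ (x i) ≤ (1 - α) ^ k := by
  classical
  obtain ⟨S, hScard, hSsep⟩ := aux_exists_sep V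
  rw [hV] at hScard
  have hα' : (0:ℝ) ≤ 1 - α := by linarith
  have hα'' : (1:ℝ) - α ≤ 1 := by linarith
  set VF := Finset.univ.filter (fun x : Fin n → F => x ∈ V) with hVF
  have hA : (∑ x : Fin n → F, Set.indicator (V : Set (Fin n → F)) (fun _ => (1:ℝ)) x
      * ∏ i, μ (x i)) = ∑ x ∈ VF, ∏ i, μ (x i) := by
    rw [hVF, Finset.sum_filter]
    refine Finset.sum_congr rfl fun x _ => ?_
    by_cases hx : x ∈ V <;> simp [Set.indicator, hx]
  rw [hA]
  -- the projection to S is injective on VF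
  have hinj : Set.InjOn (fun x : Fin n → F => (fun i : S => x i)) VF := by
    intro x hx y hy hxy
    have hxV : x ∈ V := by simpa [hVF] using hx
    have hyV : y ∈ V := by simpa [hVF] using hy
    have h0 : x - y = 0 := by
      refine hSsep (x - y) (V.sub_mem hxV hyV) fun i hi => ?_
      have := congrFun hxy (⟨i, hi⟩ : S)
      simpa [sub_eq_zero] using this
    exact sub_eq_zero.mp h0
  have key1 : ∑ x ∈ VF, ∏ i ∈ S, μ (x i) ≤ 1 := by
    have e1 : ∀ x : Fin n → F, ∏ i ∈ S, μ (x i) = ∏ i : S, μ (x i) := by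
      intro x; exact (Finset.prod_coe_sort S (fun i => μ (x i))).symm
    calc ∑ x ∈ VF, ∏ i ∈ S, μ (x i)
        = ∑ x ∈ VF, ∏ i : S, μ (x i) := Finset.sum_congr rfl fun x _ => e1 x
      _ = ∑ y ∈ VF.image (fun x : Fin n → F => (fun i : S => x i)), ∏ i : S, μ (y i) := by
          rw [Finset.sum_image (fun x hx y hy h => hinj hx hy h)]
      _ ≤ ∑ y : S → F, ∏ i : S, μ (y i) :=
          Finset.sum_le_sum_of_subset_of_nonneg (Finset.subset_univ _)
            (fun y _ _ => Finset.prod_nonneg fun i _ => hμ0 _)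
      _ = ∏ i : S, ∑ t, μ t := (Fintype.prod_sum _).symm
      _ = 1 := by simp [hμ1]
  have key2 : ∀ x : Fin n → F, ∏ i ∈ Sᶜ, μ (x i) ≤ (1 - α) ^ k := by
    intro x
    have h1 : ∏ i ∈ Sᶜ, μ (x i) ≤ ∏ i ∈ Sᶜ, (1 - α) :=
      Finset.prod_le_prod (fun i _ => hμ0 _) (fun i _ => hent _)
    have h2 : ∏ i ∈ Sᶜ, (1 - α) = (1 - α) ^ (Sᶜ.card) := Finset.prod_const _
    have hc : k ≤ Sᶜ.card := by
      rw [Finset.card_compl, Fintype.card_fin]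
      omega
    have h3 : (1 - α) ^ (Sᶜ.card) ≤ (1 - α) ^ k := pow_le_pow_of_le_one hα' hα'' hc
    calc ∏ i ∈ Sᶜ, μ (x i) ≤ (1 - α) ^ (Sᶜ.card) := by rw [← h2]; exact h1
      _ ≤ (1 - α) ^ k := h3
  calc ∑ x ∈ VF, ∏ i, μ (x i)
      = ∑ x ∈ VF, (∏ i ∈ S, μ (x i)) * ∏ i ∈ Sᶜ, μ (x i) :=
        Finset.sum_congr rfl fun x _ => (Finset.prod_mul_prod_compl S _).symm
    _ ≤ ∑ x ∈ VF, (∏ i ∈ S, μ (x i)) * (1 - α) ^ k :=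
        Finset.sum_le_sum fun x _ => mul_le_mul_of_nonneg_left (key2 x)
          (Finset.prod_nonneg fun i _ => hμ0 _)
    _ = (∑ x ∈ VF, ∏ i ∈ S, μ (x i)) * (1 - α) ^ k := by rw [Finset.sum_mul]
    _ ≤ 1 * (1 - α) ^ k := mul_le_mul_of_nonneg_right key1 (pow_nonneg hα' k)
    _ = (1 - α) ^ k := one_mul _
end

section
/- Let A₁, ..., A_k and B be nonempty subsets of a finite abelian group Z with A₁ + ⋯ + A_k ⊆ B, and suppose B contains no coset of a non-trivial subgroup of Z. Then |B| + (k−1) ≥ |A₁| + ⋯ + |A_k|. -/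
open scoped Pointwise

open Finset

/-- If a nonempty finite set `D` is carried into itself by translation by `e ≠ 0`,
and a translate of `D` lies in `B`, then `B` contains a coset of the nontrivial
subgroup generated by `e`, contradicting the coset-freeness of `B`. -/
lemma aux_coset_contra {Z : Type*} [AddCommGroup Z] [Fintype Z] [DecidableEq Z]
    {B D : Finset Z} {e t : Z} (he : e ≠ 0) (hD : D.Nonempty)
    (hstab : ∀ d ∈ D, d + e ∈ D) (hDB : ∀ d ∈ D, d + t ∈ B)
    (hcoset : ∀ (H : AddSubgroup Z), H ≠ ⊥ → ∀ s : Z, ¬ (∀ h ∈ H, h + s ∈ B)) : False := by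
  obtain ⟨d₀, hd₀⟩ := hD
  have himg : D.image (· + e) = D := by
    apply Finset.eq_of_subset_of_card_le
    · intro x hx
      obtain ⟨d, hd, rfl⟩ := Finset.mem_image.mp hx
      exact hstab d hd
    · rw [Finset.card_image_of_injective _ (add_left_injective e)]
  have hback : ∀ d ∈ D, d - e ∈ D := by
    intro d hd
    rw [← himg] at hd
    obtain ⟨y, hy, hye⟩ := Finset.mem_image.mp hd
    have : y = d - e := by rw [← hye]; abel
    rwa [← this]
  have hall : ∀ n : ℤ, d₀ + n • e ∈ D := by
    intro n
    induction n using Int.induction_on with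
    | zero => simpa using hd₀
    | succ k ih =>
        have h2 : d₀ + ((k : ℤ) + 1) • e = (d₀ + (k : ℤ) • e) + e := by
          rw [add_zsmul, one_zsmul, add_assoc]
        rw [h2]; exact hstab _ ih
    | pred k ih =>
        have h2 : d₀ + (-(k : ℤ) - 1) • e = (d₀ + (-(k : ℤ)) • e) - e := by
          rw [sub_zsmul, one_zsmul]; abel
        rw [h2]; exact hback _ ih
  have hne : AddSubgroup.zmultiples e ≠ ⊥ := by
    intro hbot
    apply he
    have : e ∈ AddSubgroup.zmultiples e := AddSubgroup.mem_zmultiples e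
    rw [hbot] at this
    simpa using this
  exact hcoset (AddSubgroup.zmultiples e) hne (d₀ + t) (by
    intro h hh
    obtain ⟨n, rfl⟩ := AddSubgroup.mem_zmultiples_iff.mp hh
    have := hDB _ (hall n)
    have h3 : n • e + (d₀ + t) = (d₀ + n • e) + t := by abel
    rwa [h3])

/-- lexicographic comparison helper -/
lemma aux_lex_lt {K F F' m m' : ℕ} (hm' : m' < K)
    (h : F' < F ∨ (F' = F ∧ m' < m)) : F' * K + m' < F * K + m := by
  rcases h with h | ⟨rfl, h⟩
  · calc F' * K + m' < F' * K + K := by omega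
      _ = (F' + 1) * K := by ring
      _ ≤ F * K := Nat.mul_le_mul_right _ (by omega)
      _ ≤ F * K + m := Nat.le_add_right _ _
  · omega

/-- The key two-set inequality: if `A + C ⊆ B` and `B` contains no coset of a
nontrivial subgroup, then `|A| + |C| ≤ |B| + 1`.  Proved by the Dyson e-transform. -/
lemma aux_two_set {Z : Type*} [AddCommGroup Z] [Fintype Z] [DecidableEq Z]
    (B : Finset Z)
    (hcoset : ∀ (H : AddSubgroup Z), H ≠ ⊥ → ∀ s : Z, ¬ (∀ h ∈ H, h + s ∈ B)) :
    ∀ n (A C : Finset Z), A.Nonempty → C.Nonempty → A + C ⊆ B →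
      (2 * Fintype.card Z - A.card - C.card) * (Fintype.card Z + 1)
        + min A.card C.card ≤ n →
      A.card + C.card ≤ B.card + 1 := by
  intro n
  induction n using Nat.strong_induction_on with
  | _ n IH =>
  have main : ∀ A C : Finset Z, A.Nonempty → C.Nonempty → A + C ⊆ B →
      (2 * Fintype.card Z - A.card - C.card) * (Fintype.card Z + 1)
        + min A.card C.card ≤ n →
      C.card ≤ A.card → A.card + C.card ≤ B.card + 1 := by
    intro A C hA hC hsub hm hle
    set N := Fintype.card Z with hN
    by_cases hC1 : C.card ≤ 1
    · -- |C| = 1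
      obtain ⟨c, rfl⟩ := Finset.card_eq_one.mp (le_antisymm hC1 hC.card_pos)
      have hcard : (A + {c}).card = A.card := by
        rw [Finset.add_singleton]
        exact Finset.card_image_of_injective _ (fun x y hxy => by simpa using hxy)
      have := Finset.card_le_card hsub
      rw [hcard] at this
      simp only [Finset.card_singleton]
      omega
    · -- |C| ≥ 2
      push_neg at hC1
      obtain ⟨c₁, hc₁, c₂, hc₂, hcc⟩ := Finset.one_lt_card.mp hC1
      set e := c₁ - c₂ with hee
      have he : e ≠ 0 := sub_ne_zero.mpr hcc
      -- A ≠ univ, so |A| < N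
      have hAlt : A.card < N := by
        rcases lt_or_ge A.card N with h | h
        · exact h
        · exfalso
          have hAuniv : A = Finset.univ :=
            Finset.eq_univ_of_card _ (le_antisymm (Finset.card_le_univ A) h)
          have hBuniv : ∀ x : Z, x ∈ B := by
            intro x
            have : (x - c₂) + c₂ ∈ A + C :=
              Finset.add_mem_add (hAuniv ▸ Finset.mem_univ _) hc₂
            have hx : (x - c₂) + c₂ = x := by abel
            exact hsub (hx ▸ this)
          have htop : (⊤ : AddSubgroup Z) ≠ ⊥ := by
            intro htb
            apply he
            have : e ∈ (⊤ : AddSubgroup Z) := AddSubgroup.mem_top e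
            rw [htb] at this
            simpa using this
          exact hcoset ⊤ htop 0 (fun h _ => hBuniv _)
      have hCN : C.card ≤ N := Finset.card_le_univ C
      set δA := (A.filter (fun a => a + e ∉ A)).card with hdA
      set δC := (C.filter (fun c => c + e ∉ C)).card with hdC
      have hδAle : (A.filter (fun a => a + e ∈ A)).card + δA = A.card := by
        rw [hdA]; exact Finset.card_filter_add_card_filter_not _
      have hδCle : (C.filter (fun c => c + e ∈ C)).card + δC = C.card := by
        rw [hdC]; exact Finset.card_filter_add_card_filter_not _
      by_cases hδC0 : δC = 0
      · -- C is e-periodic: contradiction with coset-freeness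
        exfalso
        have hCstab : ∀ c ∈ C, c + e ∈ C := by
          intro c hc
          by_contra hnc
          have : c ∈ C.filter (fun c => c + e ∉ C) := Finset.mem_filter.mpr ⟨hc, hnc⟩
          have := Finset.card_pos.mpr ⟨c, this⟩
          omega
        obtain ⟨a₀, ha₀⟩ := hA
        exact aux_coset_contra he hC hCstab
          (fun c hc => hsub (by
            have h0 : a₀ + c ∈ A + C := Finset.add_mem_add ha₀ hc
            rwa [add_comm a₀ c] at h0)) hcoset
      · -- δC ≥ 1
        have hδC1 : 1 ≤ δC := Nat.one_le_iff_ne_zero.mpr hδC0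
        -- growth/shrink card computations
        have himA : (A.image (· + e)).card = A.card :=
          Finset.card_image_of_injective _ (fun x y hxy => by simpa using hxy)
        have himC : (C.image (· + e)).card = C.card :=
          Finset.card_image_of_injective _ (fun x y hxy => by simpa using hxy)
        have hsdA : (A.image (· + e)) \ A = (A.filter (fun a => a + e ∉ A)).image (· + e) := by
          ext x
          simp only [Finset.mem_sdiff, Finset.mem_image, Finset.mem_filter]
          constructor
          · rintro ⟨⟨a, ha, rfl⟩, hx⟩; exact ⟨a, ⟨ha, hx⟩, rfl⟩
          · rintro ⟨a, ⟨ha, hx⟩, rfl⟩; exact ⟨⟨a, ha, rfl⟩, hx⟩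
        have hsdC : (C.image (· + e)) \ C = (C.filter (fun c => c + e ∉ C)).image (· + e) := by
          ext x
          simp only [Finset.mem_sdiff, Finset.mem_image, Finset.mem_filter]
          constructor
          · rintro ⟨⟨a, ha, rfl⟩, hx⟩; exact ⟨a, ⟨ha, hx⟩, rfl⟩
          · rintro ⟨a, ⟨ha, hx⟩, rfl⟩; exact ⟨⟨a, ha, rfl⟩, hx⟩
        have hunionA : (A ∪ A.image (· + e)).card = A.card + δA := by
          have h1 := Finset.card_sdiff_add_card (A.image (· + e)) A
          rw [hsdA, Finset.card_image_of_injective _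
            (fun x y hxy => by simpa using hxy : Function.Injective (· + e))] at h1
          rw [Finset.union_comm]
          omega
        have hunionC : (C ∪ C.image (· + e)).card = C.card + δC := by
          have h1 := Finset.card_sdiff_add_card (C.image (· + e)) C
          rw [hsdC, Finset.card_image_of_injective _
            (fun x y hxy => by simpa using hxy : Function.Injective (· + e))] at h1
          rw [Finset.union_comm]
          omega
        by_cases hcase : δC ≤ δA
        · -- transform: grow A, shrink C
          set A' := A ∪ A.image (· + e) with hA'
          set C' := C.filter (fun c => c + e ∈ C) with hC'
          have hA'card : A'.card = A.card + δA := hunionA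
          have hC'card : C'.card + δC = C.card := hδCle
          have hC'ne : C'.Nonempty := by
            refine ⟨c₂, Finset.mem_filter.mpr ⟨hc₂, ?_⟩⟩
            have : c₂ + e = c₁ := by rw [hee]; abel
            rwa [this]
          have hA'ne : A'.Nonempty := hA.mono Finset.subset_union_left
          have hsub' : A' + C' ⊆ B := by
            intro x hx
            obtain ⟨a, ha, c, hc, rfl⟩ := Finset.mem_add.mp hx
            obtain ⟨hc, hce⟩ := Finset.mem_filter.mp hc
            rcases Finset.mem_union.mp ha with ha | ha
            · exact hsub (Finset.add_mem_add ha hc)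
            · obtain ⟨a', ha', rfl⟩ := Finset.mem_image.mp ha
              have : a' + e + c = a' + (c + e) := by abel
              rw [this]
              exact hsub (Finset.add_mem_add ha' hce)
          -- measure decreases
          have hmeas : (2 * N - A'.card - C'.card) * (N + 1) + min A'.card C'.card
              < (2 * N - A.card - C.card) * (N + 1) + min A.card C.card := by
            have hm' : min A'.card C'.card < N + 1 := by
              have := min_le_right A'.card C'.card
              have := Finset.card_le_univ C'
              omega
            apply aux_lex_lt hm'
            have hmin : min A.card C.card = C.card := min_eq_right hle
            have hmin' : min A'.card C'.card ≤ C'.card := min_le_right _ _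
            have hF : 2 * N - A'.card - C'.card ≤ 2 * N - A.card - C.card := by omega
            rcases lt_or_eq_of_le hF with h | h
            · exact Or.inl h
            · exact Or.inr ⟨h, by omega⟩
          have := IH _ (by
              calc (2 * N - A'.card - C'.card) * (N + 1) + min A'.card C'.card
                  < (2 * N - A.card - C.card) * (N + 1) + min A.card C.card := hmeas
                _ ≤ n := hm)
            A' C' hA'ne hC'ne hsub' le_rfl
          omega
        · -- transform: shrink A, grow C
          push_neg at hcase  -- δA < δC
          set A' := A.filter (fun a => a + e ∈ A) with hA'
          set C' := C ∪ C.image (· + e) with hC'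
          have hA'card : A'.card + δA = A.card := hδAle
          have hC'card : C'.card = C.card + δC := hunionC
          have hδCC : δC ≤ C.card := by
            rw [hdC]; exact Finset.card_filter_le _ _
          have hA'ne : A'.Nonempty := by
            apply Finset.card_pos.mp
            omega
          have hC'ne : C'.Nonempty := hC.mono Finset.subset_union_left
          have hsub' : A' + C' ⊆ B := by
            intro x hx
            obtain ⟨a, ha, c, hc, rfl⟩ := Finset.mem_add.mp hx
            obtain ⟨ha, hae⟩ := Finset.mem_filter.mp ha
            rcases Finset.mem_union.mp hc with hc | hc
            · exact hsub (Finset.add_mem_add ha hc)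
            · obtain ⟨c', hc', rfl⟩ := Finset.mem_image.mp hc
              have : a + (c' + e) = (a + e) + c' := by abel
              rw [this]
              exact hsub (Finset.add_mem_add hae hc')
          have hmeas : (2 * N - A'.card - C'.card) * (N + 1) + min A'.card C'.card
              < (2 * N - A.card - C.card) * (N + 1) + min A.card C.card := by
            have hm' : min A'.card C'.card < N + 1 := by
              have := min_le_right A'.card C'.card
              have := Finset.card_le_univ C'
              omega
            apply aux_lex_lt hm'
            left
            have hC'N : C'.card ≤ N := Finset.card_le_univ C'
            have hA'N : A'.card ≤ N := Finset.card_le_univ A'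
            omega
          have := IH _ (by
              calc (2 * N - A'.card - C'.card) * (N + 1) + min A'.card C'.card
                  < (2 * N - A.card - C.card) * (N + 1) + min A.card C.card := hmeas
                _ ≤ n := hm)
            A' C' hA'ne hC'ne hsub' le_rfl
          omega
  intro A C hA hC hsub hm
  rcases le_total C.card A.card with h | h
  · exact main A C hA hC hsub hm h
  · have := main C A hC hA (by rwa [add_comm C A]) (by
      have h2 : 2 * Fintype.card Z - C.card - A.card
          = 2 * Fintype.card Z - A.card - C.card := by omega
      rw [min_comm, h2]; exact hm) h
    omega

lemma aux_sum_nonempty {Z : Type*} [AddCommGroup Z] [DecidableEq Z] {k : ℕ}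
    (A : Fin k → Finset Z) (hA : ∀ i, (A i).Nonempty) : (∑ i, A i).Nonempty := by
  induction k with
  | zero => simp
  | succ k IH =>
      rw [Fin.sum_univ_castSucc]
      exact ((IH _ (fun i => hA _)).add (hA _))

lemma aux_iter {Z : Type*} [AddCommGroup Z] [Fintype Z] [DecidableEq Z] :
    ∀ (k : ℕ), 1 ≤ k → ∀ (A : Fin k → Finset Z) (B : Finset Z),
    (∀ i, (A i).Nonempty) →
    (∑ i, A i) ⊆ B →
    (∀ (H : AddSubgroup Z), H ≠ ⊥ → ∀ s : Z, ¬ (∀ h ∈ H, h + s ∈ B)) →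
    (∑ i, (A i).card) ≤ B.card + (k - 1) := by
  intro k
  induction k with
  | zero => omega
  | succ k IH =>
      intro _ A B hA hsub hcoset
      rcases Nat.eq_zero_or_pos k with rfl | hk'
      · -- k = 1
        have h0 : (∑ i : Fin 1, A i) = A 0 := by simp
        have hsub0 : A 0 ⊆ B := h0 ▸ hsub
        have := Finset.card_le_card hsub0
        simpa using this
      · -- k ≥ 1
        set S := ∑ i : Fin k, A i.castSucc with hS
        have hsum : (∑ i : Fin (k+1), A i) = S + A (Fin.last k) := Fin.sum_univ_castSucc A
        have hSB : S + A (Fin.last k) ⊆ B := hsum ▸ hsub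
        have hSne : S.Nonempty := aux_sum_nonempty _ (fun i => hA _)
        obtain ⟨a, ha⟩ := hA (Fin.last k)
        -- S inherits coset-freeness from B
        have hScoset : ∀ (H : AddSubgroup Z), H ≠ ⊥ → ∀ s : Z,
            ¬ (∀ h ∈ H, h + s ∈ S) := by
          intro H hH s hall
          apply hcoset H hH (s + a)
          intro h hh
          have : (h + s) + a ∈ S + A (Fin.last k) := Finset.add_mem_add (hall h hh) ha
          have h2 : h + (s + a) = (h + s) + a := by abel
          rw [h2]
          exact hSB this
        have hIH := IH hk' (fun i => A i.castSucc) S (fun i => hA _)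
          subset_rfl hScoset
        have hkey := aux_two_set B hcoset _ S (A (Fin.last k)) hSne (hA _) hSB le_rfl
        have hsumcard : (∑ i : Fin (k+1), (A i).card)
            = (∑ i : Fin k, (A i.castSucc).card) + (A (Fin.last k)).card :=
          Fin.sum_univ_castSucc _
        have hrfl : (∑ i : Fin k, ((fun i => A i.castSucc) i).card)
            = ∑ i : Fin k, (A i.castSucc).card := rfl
        rw [hrfl] at hIH
        omega

/-- **Iterated Kneser inequality.** If `A₁ + ⋯ + A_k ⊆ B` in a finite abelian group and
`B` contains no coset of a nontrivial subgroup, then `|B| + (k-1) ≥ |A₁| + ⋯ + |A_k|`. -/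
theorem stmt_3 {Z : Type*} [AddCommGroup Z] [Fintype Z] [DecidableEq Z]
    (k : ℕ) (hk : 1 ≤ k) (A : Fin k → Finset Z) (B : Finset Z)
    (hA : ∀ i, (A i).Nonempty) (hB : B.Nonempty)
    (hsub : (∑ i, A i) ⊆ B)
    (hcoset : ∀ (H : AddSubgroup Z), H ≠ ⊥ → ∀ s : Z,
      ¬ (∀ h ∈ H, h + s ∈ B)) :
    (∑ i, (A i).card) ≤ B.card + (k - 1) :=
  aux_iter k hk A B hA hsub hcoset
end

section
/- Let λ be a Young diagram with row lengths r_1 ≥ r_2 ≥ ⋯ and column lengths c_1, c_2, ⋯, and suppose the weight w(λ) = Σ_{(i,j) ∈ λ} j(j+1)/2 satisfies w(λ) < εn. Then the number d_λ(n) of semi-standard Young tableaux of shape λ with entries in {1, ..., n} satisfies d_λ(n) ≤ exp(C √ε · n) for an absolute constant C and all sufficiently large n. -/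
open Finset Real

/-- The number of semistandard Young tableaux of shape `μ` with entries among `n`
letters (entries in `{0, …, n-1}`). -/
noncomputable def ssytCount (μ : YoungDiagram) (n : ℕ) : ℕ :=
  Nat.card {T : SemistandardYoungTableau μ // ∀ c ∈ μ.cells, T.entry c.1 c.2 < n}

/-- The weight `w(λ) = Σ_j c_j(c_j+1)/2` of a Young diagram, i.e. the sum of the entries
of the minimal semistandard tableau on `λ`. -/
def diagramWeight (μ : YoungDiagram) : ℕ :=
  ∑ j ∈ Finset.range (μ.rowLen 0), μ.colLen j * (μ.colLen j + 1) / 2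

namespace Stmt8Aux


/-- `-log(1-e^{-x}) ≤ 2/√x` for `0 < x ≤ 1`. -/
lemma head_bound {x : ℝ} (hx : 0 < x) (hx1 : x ≤ 1) :
    -Real.log (1 - Real.exp (-x)) ≤ 2 / Real.sqrt x := by
  have hex : Real.exp (-x) ≤ 1 / (1 + x) := by
    rw [Real.exp_neg, one_div]
    exact inv_anti₀ (by linarith) (by linarith [Real.add_one_le_exp x])
  have h1 : x / (1 + x) ≤ 1 - Real.exp (-x) := by
    have : x / (1 + x) = 1 - 1 / (1 + x) := by field_simp; ring
    rw [this]; linarith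
  have hpos : (0:ℝ) < x / (1 + x) := div_pos hx (by linarith)
  have hlog : Real.log (x / (1 + x)) ≤ Real.log (1 - Real.exp (-x)) :=
    Real.log_le_log hpos h1
  have hrw : Real.log (x / (1 + x)) = Real.log x - Real.log (1 + x) :=
    Real.log_div (ne_of_gt hx) (by positivity)
  -- so -log(1-e^{-x}) ≤ log(1+x) - log x ≤ log 2 - log x
  have hsq : Real.sqrt x * Real.sqrt x = x := Real.mul_self_sqrt hx.le
  have hsqpos : 0 < Real.sqrt x := Real.sqrt_pos.2 hx
  have hlogx : -Real.log x ≤ 2 / Real.sqrt x - 2 := by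
    have h3 : Real.log (1 / Real.sqrt x) ≤ 1 / Real.sqrt x - 1 :=
      Real.log_le_sub_one_of_pos (by positivity)
    have h4 : Real.log (1 / Real.sqrt x) = -Real.log (Real.sqrt x) := by
      rw [one_div, Real.log_inv]
    have h5 : Real.log x = 2 * Real.log (Real.sqrt x) := by
      rw [Real.log_sqrt hx.le]; ring
    rw [h4] at h3
    rw [h5]
    have : 1 / Real.sqrt x - 1 = (2 / Real.sqrt x - 2) / 2 := by ring
    linarith
  have hlog2 : Real.log (1 + x) ≤ 1 := by
    have := Real.log_le_sub_one_of_pos (show (0:ℝ) < 1 + x by linarith)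
    linarith
  linarith

/-- `-log(1-e^{-x}) ≤ 2 e^{-x}` for `x ≥ 1`. -/
lemma tail_bound {x : ℝ} (hx : 1 ≤ x) :
    -Real.log (1 - Real.exp (-x)) ≤ 2 * Real.exp (-x) := by
  set y := Real.exp (-x) with hy
  have hy0 : 0 < y := Real.exp_pos _
  have hyh : y ≤ 1 / 2 := by
    have h1 : Real.exp (-x) ≤ Real.exp (-1) := by
      apply Real.exp_le_exp.2; linarith
    have h2 : Real.exp (-1) ≤ 1/2 := by
      rw [Real.exp_neg]
      rw [inv_le_comm₀ (Real.exp_pos 1) (by norm_num)]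
      have := Real.add_one_le_exp (1:ℝ)
      linarith
    linarith
  have hpos : (0:ℝ) < 1 - y := by linarith
  have h3 : Real.log ((1 - y)⁻¹) ≤ (1 - y)⁻¹ - 1 :=
    Real.log_le_sub_one_of_pos (by positivity)
  have h4 : Real.log ((1 - y)⁻¹) = -Real.log (1 - y) := Real.log_inv _
  have h5 : (1 - y)⁻¹ - 1 = y / (1 - y) := by field_simp; ring
  have h6 : y / (1 - y) ≤ 2 * y := by
    rw [div_le_iff₀ hpos]; nlinarith
  rw [h4, h5] at h3; linarith

lemma sum_exp_le (t : ℝ) (ht : 0 < t) (N : ℕ) :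
    ∑ i ∈ Finset.range N, Real.exp (-(t * (i + 1))) ≤ 1 / t := by
  have hq0 : 0 < Real.exp (-t) := Real.exp_pos _
  have hq1 : Real.exp (-t) < 1 := by
    rw [Real.exp_lt_one_iff]; linarith
  have hrw : ∀ i : ℕ, Real.exp (-(t * (i + 1))) = Real.exp (-t) ^ (i + 1) := by
    intro i
    rw [← Real.exp_nat_mul]
    congr 1; push_cast; ring
  calc ∑ i ∈ Finset.range N, Real.exp (-(t * (i + 1)))
      = ∑ i ∈ Finset.range N, Real.exp (-t) * Real.exp (-t) ^ i := by
        refine Finset.sum_congr rfl fun i _ => ?_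
        rw [hrw i, pow_succ]; ring
    _ = Real.exp (-t) * ∑ i ∈ Finset.range N, Real.exp (-t) ^ i := by
        rw [Finset.mul_sum]
    _ ≤ Real.exp (-t) * (1 - Real.exp (-t))⁻¹ := by
        apply mul_le_mul_of_nonneg_left _ hq0.le
        rw [geom_sum_eq (ne_of_lt hq1)]
        have hpos' : (0:ℝ) < 1 - Real.exp (-t) := by linarith
        have heq : (Real.exp (-t) ^ N - 1) / (Real.exp (-t) - 1)
            = (1 - Real.exp (-t) ^ N) / (1 - Real.exp (-t)) := by
          rw [div_eq_div_iff (by linarith) (by linarith)]; ring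
        rw [heq, div_le_iff₀ hpos', inv_mul_cancel₀ (ne_of_gt hpos')]
        have hpow : 0 ≤ Real.exp (-t) ^ N := by positivity
        linarith
    _ ≤ 1 / t := by
        have het : t + 1 ≤ Real.exp t := by linarith [Real.add_one_le_exp t]
        have h1 : Real.exp (-t) * (1 - Real.exp (-t))⁻¹ = (Real.exp t - 1)⁻¹ := by
          rw [Real.exp_neg]
          have he : 0 < Real.exp t := Real.exp_pos t
          field_simp
        rw [h1, one_div]
        apply inv_anti₀ ht
        linarith

lemma sum_inv_sqrt (K : ℕ) :
    ∑ i ∈ Finset.range K, (Real.sqrt (i + 1))⁻¹ ≤ 2 * Real.sqrt K := by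
  induction K with
  | zero => simp
  | succ K ih =>
    rw [Finset.sum_range_succ]
    have ha : Real.sqrt (K + 1) ^ 2 = K + 1 := Real.sq_sqrt (by positivity)
    have hb : Real.sqrt K ^ 2 = K := Real.sq_sqrt (by positivity)
    have hap : 0 < Real.sqrt ((K:ℝ) + 1) := Real.sqrt_pos.2 (by positivity)
    have hbp : 0 ≤ Real.sqrt (K:ℝ) := Real.sqrt_nonneg _
    have key : (Real.sqrt ((K:ℝ) + 1))⁻¹ ≤ 2 * Real.sqrt ((K:ℝ) + 1) - 2 * Real.sqrt K := by
      rw [inv_le_iff_one_le_mul₀ hap]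
      nlinarith [sq_nonneg (Real.sqrt ((K:ℝ)+1) - Real.sqrt K)]
    have hcast : ((K:ℝ) + 1) = ((K + 1 : ℕ) : ℝ) := by push_cast; ring
    calc ∑ i ∈ Finset.range K, (Real.sqrt (i + 1))⁻¹ + (Real.sqrt ((K:ℝ) + 1))⁻¹
        ≤ 2 * Real.sqrt K + (2 * Real.sqrt ((K:ℝ) + 1) - 2 * Real.sqrt K) :=
          add_le_add ih key
      _ = 2 * Real.sqrt ((K + 1 : ℕ) : ℝ) := by rw [← hcast]; ring

lemma sum_f_le (t : ℝ) (ht : 0 < t) (N : ℕ) :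
    ∑ i ∈ Finset.range N, (-Real.log (1 - Real.exp (-(t * (i + 1))))) ≤ 8 / t := by
  have hterm : ∀ i : ℕ,
      -Real.log (1 - Real.exp (-(t * (i + 1)))) ≤
        (if t * (i + 1) < 1 then 2 / Real.sqrt (t * (i + 1)) else 0)
          + 2 * Real.exp (-(t * (i + 1))) := by
    intro i
    have hx : 0 < t * ((i:ℝ) + 1) := by positivity
    by_cases h : t * ((i:ℝ) + 1) < 1
    · rw [if_pos h]
      have := head_bound hx h.le
      have hexp : 0 ≤ 2 * Real.exp (-(t * ((i:ℝ) + 1))) := by positivity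
      linarith
    · rw [if_neg h]
      have := tail_bound (by linarith [not_lt.1 h] : 1 ≤ t * ((i:ℝ) + 1))
      linarith
  calc ∑ i ∈ Finset.range N, (-Real.log (1 - Real.exp (-(t * (i + 1)))))
      ≤ ∑ i ∈ Finset.range N,
          ((if t * (i + 1) < 1 then 2 / Real.sqrt (t * (i + 1)) else 0)
            + 2 * Real.exp (-(t * (i + 1)))) :=
        Finset.sum_le_sum fun i _ => hterm i
    _ = (∑ i ∈ Finset.range N, (if t * (i + 1) < 1 then 2 / Real.sqrt (t * (i + 1)) else 0))
          + ∑ i ∈ Finset.range N, 2 * Real.exp (-(t * (i + 1))) := by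
        rw [Finset.sum_add_distrib]
    _ ≤ 6 / t + 2 * (1 / t) := by
        have hgeom : ∑ i ∈ Finset.range N, 2 * Real.exp (-(t * (i + 1))) ≤ 2 * (1 / t) := by
          rw [← Finset.mul_sum]
          exact mul_le_mul_of_nonneg_left (sum_exp_le t ht N) (by norm_num)
        refine add_le_add ?_ hgeom
        -- head part
        by_cases hts : 1 ≤ t
        · have : ∀ i ∈ Finset.range N,
              (if t * ((i:ℝ) + 1) < 1 then 2 / Real.sqrt (t * (i + 1)) else 0) = 0 := by
            intro i _
            rw [if_neg]
            push_neg
            have h0 : (0:ℝ) ≤ (i:ℝ) := Nat.cast_nonneg i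
            nlinarith
          rw [Finset.sum_congr rfl this, Finset.sum_const, smul_zero]
          positivity
        · push_neg at hts
          set K := Nat.ceil (1 / t) with hK
          have hsub : (Finset.range N).filter (fun i : ℕ => t * ((i:ℝ) + 1) < 1) ⊆ Finset.range K := by
            intro i hi
            rw [Finset.mem_filter] at hi
            rw [Finset.mem_range]
            have h2 : (i:ℝ) + 1 < 1 / t := by
              rw [lt_div_iff₀ ht]; linarith [hi.2]
            have h3 : (i:ℝ) < 1 / t := by linarith
            have h4 : (1:ℝ) / t ≤ K := Nat.le_ceil _
            exact_mod_cast h3.trans_le h4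
          have hK2 : (K:ℝ) ≤ 2 / t := by
            have h1 : (K:ℝ) < 1 / t + 1 := Nat.ceil_lt_add_one (by positivity)
            have h2 : (1:ℝ) ≤ 1 / t := by
              rw [le_div_iff₀ ht]; linarith
            have h3 : (2:ℝ) / t = 2 * (1 / t) := by ring
            linarith
          calc ∑ i ∈ Finset.range N, (if t * ((i:ℝ) + 1) < 1 then 2 / Real.sqrt (t * (i + 1)) else 0)
              = ∑ i ∈ (Finset.range N).filter (fun i : ℕ => t * ((i:ℝ) + 1) < 1),
                  2 / Real.sqrt (t * (i + 1)) := by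
                rw [Finset.sum_filter]
            _ ≤ ∑ i ∈ Finset.range K, 2 / Real.sqrt (t * (i + 1)) := by
                apply Finset.sum_le_sum_of_subset_of_nonneg hsub
                intro i _ _
                positivity
            _ = ∑ i ∈ Finset.range K, (2 / Real.sqrt t) * (Real.sqrt ((i:ℝ) + 1))⁻¹ := by
                refine Finset.sum_congr rfl fun i _ => ?_
                rw [Real.sqrt_mul ht.le]
                field_simp
            _ = (2 / Real.sqrt t) * ∑ i ∈ Finset.range K, (Real.sqrt ((i:ℝ) + 1))⁻¹ := by
                rw [← Finset.mul_sum]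
            _ ≤ (2 / Real.sqrt t) * (2 * Real.sqrt K) := by
                apply mul_le_mul_of_nonneg_left (sum_inv_sqrt K) (by positivity)
            _ ≤ 6 / t := by
                have hst : 0 < Real.sqrt t := Real.sqrt_pos.2 ht
                have h1 : Real.sqrt (K:ℝ) ≤ Real.sqrt (2 / t) := Real.sqrt_le_sqrt hK2
                have h2 : (2 / Real.sqrt t) * (2 * Real.sqrt (K:ℝ)) ≤
                    (2 / Real.sqrt t) * (2 * Real.sqrt (2 / t)) := by
                  apply mul_le_mul_of_nonneg_left _ (by positivity)
                  linarith
                refine h2.trans ?_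
                rw [show (2:ℝ) / t = 2 * t⁻¹ by ring, Real.sqrt_mul (by norm_num),
                  Real.sqrt_inv]
                have hs2 : Real.sqrt 2 ≤ 1.5 := by
                  rw [show (1.5:ℝ) = Real.sqrt (1.5^2) by
                    rw [Real.sqrt_sq]; norm_num]
                  apply Real.sqrt_le_sqrt; norm_num
                have hts' : Real.sqrt t * Real.sqrt t = t := Real.mul_self_sqrt ht.le
                have hexp : (2 / Real.sqrt t) * (2 * (Real.sqrt 2 * (Real.sqrt t)⁻¹)) =
                    4 * Real.sqrt 2 / t := by
                  field_simp
                  rw [Real.sq_sqrt ht.le]; ring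
                rw [hexp]
                rw [div_le_div_iff₀ (by positivity) ht]
                nlinarith
    _ ≤ 8 / t := by
        rw [show (2:ℝ) * (1/t) = 2/t by ring, ← add_div]
        norm_num

lemma choose_mul_le_one (m k : ℕ) (hk : k ≤ m) {x : ℝ} (hx0 : 0 < x) (hx1 : x < 1) :
    (m.choose k : ℝ) * (x ^ k * (1 - x) ^ (m - k)) ≤ 1 := by
  have hxm : (0:ℝ) < 1 - x := by linarith
  have hone : ((x + (1 - x)) : ℝ) ^ m = 1 := by norm_num
  have hexp : ((x + (1 - x)) : ℝ) ^ m
      = ∑ j ∈ Finset.range (m + 1), x ^ j * (1 - x) ^ (m - j) * (m.choose j : ℝ) :=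
    add_pow x (1 - x) m
  have hmem : k ∈ Finset.range (m + 1) := Finset.mem_range.2 (Nat.lt_succ_of_le hk)
  have hsingle : x ^ k * (1 - x) ^ (m - k) * (m.choose k : ℝ)
      ≤ ∑ j ∈ Finset.range (m + 1), x ^ j * (1 - x) ^ (m - j) * (m.choose j : ℝ) := by
    apply Finset.single_le_sum _ hmem
    intro j _
    positivity
  calc (m.choose k : ℝ) * (x ^ k * (1 - x) ^ (m - k))
      = x ^ k * (1 - x) ^ (m - k) * (m.choose k : ℝ) := by ring
    _ ≤ ∑ j ∈ Finset.range (m + 1), x ^ j * (1 - x) ^ (m - j) * (m.choose j : ℝ) := hsingle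
    _ = 1 := by rw [← hexp, hone]

lemma row_bound (n r : ℕ) (hn : 1 ≤ n) {t : ℝ} (ht : 0 < t) :
    (((n - 1 + r).choose r : ℕ) : ℝ)
      ≤ Real.exp (t * r + (n : ℝ) * (-Real.log (1 - Real.exp (-t)))) := by
  set x := Real.exp (-t) with hxdef
  have hx0 : 0 < x := Real.exp_pos _
  have hx1 : x < 1 := by rw [hxdef, Real.exp_lt_one_iff]; linarith
  have hxm : (0:ℝ) < 1 - x := by linarith
  have hsub : n - 1 + r - r = n - 1 := by omega
  have h1 : ((n - 1 + r).choose r : ℝ) * (x ^ r * (1 - x) ^ (n - 1)) ≤ 1 := by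
    have := choose_mul_le_one (n - 1 + r) r (Nat.le_add_left r (n-1)) hx0 hx1
    rwa [hsub] at this
  have hprodpos : (0:ℝ) < x ^ r * (1 - x) ^ (n - 1) := by positivity
  have h2 : ((n - 1 + r).choose r : ℝ) ≤ (x ^ r * (1 - x) ^ (n - 1))⁻¹ := by
    rw [← le_div_iff₀ hprodpos] at h1
    calc ((n - 1 + r).choose r : ℝ) ≤ 1 / (x ^ r * (1 - x) ^ (n - 1)) := h1
      _ = (x ^ r * (1 - x) ^ (n - 1))⁻¹ := one_div _
  refine h2.trans ?_
  rw [mul_inv]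
  have hxr : (x ^ r)⁻¹ = Real.exp (t * r) := by
    rw [hxdef, ← Real.exp_nat_mul, ← Real.exp_neg]
    congr 1; ring
  have hlx : ((1 - x) ^ (n - 1))⁻¹ ≤ Real.exp ((n : ℝ) * (-Real.log (1 - x))) := by
    have hinv : (1 - x)⁻¹ = Real.exp (-Real.log (1 - x)) := by
      rw [Real.exp_neg, Real.exp_log hxm]
    have hpow : ((1 - x) ^ (n - 1))⁻¹ = Real.exp (((n - 1 : ℕ) : ℝ) * (-Real.log (1 - x))) := by
      rw [← inv_pow, hinv, ← Real.exp_nat_mul]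
    rw [hpow, Real.exp_le_exp]
    apply mul_le_mul_of_nonneg_right
    · exact_mod_cast Nat.sub_le n 1
    · rw [neg_nonneg]
      apply Real.log_nonpos hxm.le
      linarith
  calc (x ^ r)⁻¹ * ((1 - x) ^ (n - 1))⁻¹
      ≤ Real.exp (t * r) * Real.exp ((n : ℝ) * (-Real.log (1 - x))) := by
        rw [hxr]
        apply mul_le_mul_of_nonneg_left hlx (by positivity)
    _ = Real.exp (t * r + (n : ℝ) * (-Real.log (1 - x))) := (Real.exp_add _ _).symm



lemma gauss (c : ℕ) : ∑ i ∈ Finset.range c, (i + 1) = c * (c + 1) / 2 := by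
  have h2 : 2 * ∑ i ∈ Finset.range c, (i + 1) = c * (c + 1) := by
    induction c with
    | zero => rfl
    | succ c ih => rw [Finset.sum_range_succ, Nat.mul_add, ih]; ring
  rw [← h2, Nat.mul_div_cancel_left _ (by norm_num)]

lemma weight_eq (μ : YoungDiagram) :
    ∑ i ∈ Finset.range (μ.colLen 0), (i + 1) * μ.rowLen i = diagramWeight μ := by
  classical
  have hrow : ∑ i ∈ Finset.range (μ.colLen 0), (i + 1) * μ.rowLen i
      = ∑ c ∈ μ.cells, (c.1 + 1) := by
    rw [← Finset.sum_fiberwise_of_maps_to (g := Prod.fst) (t := Finset.range (μ.colLen 0))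
      (fun c hc => by
        rw [Finset.mem_range, ← YoungDiagram.mem_iff_lt_colLen]
        exact μ.up_left_mem (le_refl c.1) (Nat.zero_le c.2)
          ((μ.mem_cells c).1 hc))]
    refine Finset.sum_congr rfl fun i _ => ?_
    symm
    calc ∑ c ∈ μ.cells.filter (fun c => Prod.fst c = i), (c.1 + 1)
        = ∑ c ∈ μ.cells.filter (fun c => Prod.fst c = i), (i + 1) := by
          refine Finset.sum_congr rfl fun c hc => ?_
          rw [Finset.mem_filter] at hc
          rw [hc.2]
      _ = (μ.cells.filter (fun c => Prod.fst c = i)).card • (i + 1) := Finset.sum_const _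
      _ = (i + 1) * μ.rowLen i := by
          rw [smul_eq_mul, μ.rowLen_eq_card (i := i), Nat.mul_comm]
          rfl
  have hcol : ∑ c ∈ μ.cells, (c.1 + 1)
      = ∑ j ∈ Finset.range (μ.rowLen 0), μ.colLen j * (μ.colLen j + 1) / 2 := by
    rw [← Finset.sum_fiberwise_of_maps_to (g := Prod.snd) (t := Finset.range (μ.rowLen 0))
      (fun c hc => by
        rw [Finset.mem_range, ← YoungDiagram.mem_iff_lt_rowLen]
        exact μ.up_left_mem (Nat.zero_le c.1) (le_refl c.2)
          ((μ.mem_cells c).1 hc))]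
    refine Finset.sum_congr rfl fun j _ => ?_
    have hfil : μ.cells.filter (fun c => Prod.snd c = j) = μ.col j := rfl
    calc ∑ c ∈ μ.cells.filter (fun c => Prod.snd c = j), (c.1 + 1)
        = ∑ c ∈ Finset.range (μ.colLen j) ×ˢ ({j} : Finset ℕ), (c.1 + 1) := by
          rw [hfil, YoungDiagram.col_eq_prod]
      _ = ∑ i ∈ Finset.range (μ.colLen j), (i + 1) := by
          rw [Finset.sum_product]
          simp
      _ = μ.colLen j * (μ.colLen j + 1) / 2 := gauss _
  rw [hrow, hcol]; rfl

set_option maxHeartbeats 1000000 in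
lemma count_le (μ : YoungDiagram) (n : ℕ) :
    ssytCount μ n ≤ ∏ i ∈ Finset.range (μ.colLen 0), (n - 1 + μ.rowLen i).choose (μ.rowLen i) := by
  classical
  set c0 := μ.colLen 0 with hc0
  have hbound : ∀ (T : {T : SemistandardYoungTableau μ // ∀ c ∈ μ.cells, T.entry c.1 c.2 < n})
      (i : Fin c0) (j : Fin (μ.rowLen (i:ℕ))),
      T.1.entry i j + (j:ℕ) < n - 1 + μ.rowLen (i:ℕ) := by
    intro T i j
    have hcell : ((i:ℕ), (j:ℕ)) ∈ μ := YoungDiagram.mem_iff_lt_rowLen.2 j.2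
    have hTn : T.1.entry i j < n := T.2 _ ((μ.mem_cells _).2 hcell)
    have hj := j.2
    omega
  have hmono : ∀ T (i : Fin c0), StrictMono (fun j : Fin (μ.rowLen (i:ℕ)) =>
      (⟨T.1.entry i j + j, hbound T i j⟩ : Fin (n - 1 + μ.rowLen (i:ℕ)))) := by
    intro T i j1 j2 hj
    have hj' : (j1:ℕ) < (j2:ℕ) := hj
    have hcell : ((i:ℕ), (j2:ℕ)) ∈ μ := YoungDiagram.mem_iff_lt_rowLen.2 j2.2
    have hle : T.1.entry i j1 ≤ T.1.entry i j2 := T.1.row_weak hj' hcell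
    have hle2 : T.1.entry i j1 ≤ T.1.entry i j2 := hle
    rw [Fin.lt_def]
    show T.1.entry i j1 + j1 < T.1.entry i j2 + j2
    omega
  let F : {T : SemistandardYoungTableau μ // ∀ c ∈ μ.cells, T.entry c.1 c.2 < n} →
      ∀ i : Fin c0, {s : Finset (Fin (n - 1 + μ.rowLen (i:ℕ))) // s.card = μ.rowLen (i:ℕ)} :=
    fun T i => ⟨Finset.univ.image (fun j : Fin (μ.rowLen (i:ℕ)) =>
        (⟨T.1.entry i j + j, hbound T i j⟩ : Fin (n - 1 + μ.rowLen (i:ℕ)))), by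
      rw [Finset.card_image_of_injective _ (hmono T i).injective, Finset.card_univ,
        Fintype.card_fin]⟩
  have hFinj : Function.Injective F := by
    intro T T' hTT
    apply Subtype.ext
    apply SemistandardYoungTableau.ext
    intro a b
    by_cases hab : (a, b) ∈ μ
    · have ha : a < c0 := by
        rw [hc0, ← YoungDiagram.mem_iff_lt_colLen]
        exact μ.up_left_mem (le_refl a) (Nat.zero_le b) hab
      have hb : b < μ.rowLen a := YoungDiagram.mem_iff_lt_rowLen.1 hab
      have hS : (F T ⟨a, ha⟩).1 = (F T' ⟨a, ha⟩).1 := by rw [congrFun hTT ⟨a, ha⟩]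
      have hcard : (F T ⟨a, ha⟩).1.card = μ.rowLen a := (F T ⟨a, ha⟩).2
      have hcard' : (F T ⟨a, ha⟩).1.card = μ.rowLen a := hcard
      have h1 := Finset.orderEmbOfFin_unique hcard
        (f := fun j : Fin (μ.rowLen a) =>
          (⟨T.1.entry a j + j, hbound T ⟨a, ha⟩ j⟩ : Fin (n - 1 + μ.rowLen a)))
        (fun x => Finset.mem_image_of_mem _ (Finset.mem_univ x)) (hmono T ⟨a, ha⟩)
      have h2 := Finset.orderEmbOfFin_unique hcard'
        (f := fun j : Fin (μ.rowLen a) =>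
          (⟨T'.1.entry a j + j, hbound T' ⟨a, ha⟩ j⟩ : Fin (n - 1 + μ.rowLen a)))
        (fun x => by rw [hS]; exact Finset.mem_image_of_mem _ (Finset.mem_univ x))
        (hmono T' ⟨a, ha⟩)
      have h3 := congrFun (h1.trans h2.symm) ⟨b, hb⟩
      have h4 : T.1.entry a b + b = T'.1.entry a b + b := congrArg Fin.val h3
      show T.1.entry a b = T'.1.entry a b
      omega
    · rw [T.1.zeros hab, T'.1.zeros hab]
  calc ssytCount μ n
      ≤ Nat.card (∀ i : Fin c0,
          {s : Finset (Fin (n - 1 + μ.rowLen (i:ℕ))) // s.card = μ.rowLen (i:ℕ)}) :=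
        Nat.card_le_card_of_injective F hFinj
    _ = ∏ i : Fin c0, Fintype.card
          {s : Finset (Fin (n - 1 + μ.rowLen (i:ℕ))) // s.card = μ.rowLen (i:ℕ)} := by
        rw [Nat.card_eq_fintype_card, Fintype.card_pi]
    _ = ∏ i : Fin c0, (n - 1 + μ.rowLen (i:ℕ)).choose (μ.rowLen (i:ℕ)) := by
        refine Finset.prod_congr rfl fun i _ => ?_
        rw [Fintype.card_finset_len, Fintype.card_fin]
    _ = ∏ i ∈ Finset.range c0, (n - 1 + μ.rowLen i).choose (μ.rowLen i) :=
        Fin.prod_univ_eq_prod_range (fun i => (n - 1 + μ.rowLen i).choose (μ.rowLen i)) c0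


end Stmt8Aux

/-- If `w(λ) < εn` then the number of semistandard tableaux of shape `λ` with letters
from `[n]` is at most `exp(C√ε·n)` for an absolute constant `C` and large `n`. -/
theorem stmt_8 :
    ∃ C : ℝ, 0 < C ∧ ∀ ε : ℝ, 0 < ε →
      ∃ N : ℕ, ∀ n : ℕ, N ≤ n → ∀ μ : YoungDiagram,
        (diagramWeight μ : ℝ) < ε * n →
        (ssytCount μ n : ℝ) ≤ Real.exp (C * Real.sqrt ε * n) := by
  refine ⟨10, by norm_num, fun ε hε => ⟨1, fun n hn μ hw => ?_⟩⟩
  have hn1 : 1 ≤ n := hn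
  have hnR : (1:ℝ) ≤ (n:ℝ) := by exact_mod_cast hn1
  have hnpos : (0:ℝ) < (n:ℝ) := by linarith
  have hexp0 : 0 ≤ 10 * Real.sqrt ε * n := by positivity
  set W := diagramWeight μ with hWdef
  by_cases hW0 : W = 0
  · have hc0 : μ.colLen 0 = 0 := by
      by_contra h
      have h1 : 0 < μ.colLen 0 := Nat.pos_of_ne_zero h
      have hcell : (0, 0) ∈ μ := YoungDiagram.mem_iff_lt_colLen.2 h1
      have hr : 0 < μ.rowLen 0 := YoungDiagram.mem_iff_lt_rowLen.1 hcell
      have hterm : 1 ≤ μ.colLen 0 * (μ.colLen 0 + 1) / 2 := by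
        have h2 : 2 ≤ μ.colLen 0 * (μ.colLen 0 + 1) := by
          calc 2 = 1 * 2 := rfl
            _ ≤ μ.colLen 0 * (μ.colLen 0 + 1) := Nat.mul_le_mul h1 (by omega)
        omega
      have hge : 1 ≤ W := by
        refine le_trans hterm ?_
        exact Finset.single_le_sum (f := fun j => μ.colLen j * (μ.colLen j + 1) / 2)
          (fun j _ => Nat.zero_le _) (Finset.mem_range.2 hr)
      omega
    have hle := Stmt8Aux.count_le μ n
    rw [hc0] at hle
    simp only [Finset.range_zero, Finset.prod_empty] at hle
    calc (ssytCount μ n : ℝ) ≤ 1 := by exact_mod_cast hle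
      _ ≤ Real.exp (10 * Real.sqrt ε * n) := Real.one_le_exp hexp0
  · have hW1 : 1 ≤ W := Nat.one_le_iff_ne_zero.2 hW0
    have hWR : (1:ℝ) ≤ (W:ℝ) := by exact_mod_cast hW1
    have hWpos : (0:ℝ) < (W:ℝ) := by linarith
    have hsn : 0 < Real.sqrt (n:ℝ) := Real.sqrt_pos.2 hnpos
    have hsW : 0 < Real.sqrt (W:ℝ) := Real.sqrt_pos.2 hWpos
    set t : ℝ := Real.sqrt (n:ℝ) / Real.sqrt (W:ℝ) with ht_def
    have ht : 0 < t := div_pos hsn hsW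
    set c0 := μ.colLen 0 with hc0def
    have h1 : (ssytCount μ n : ℝ) ≤ ∏ i ∈ Finset.range c0,
        (((n - 1 + μ.rowLen i).choose (μ.rowLen i) : ℕ) : ℝ) := by
      rw [← Nat.cast_prod]
      exact_mod_cast Stmt8Aux.count_le μ n
    have h2 : ∏ i ∈ Finset.range c0, (((n - 1 + μ.rowLen i).choose (μ.rowLen i) : ℕ) : ℝ)
        ≤ ∏ i ∈ Finset.range c0,
            Real.exp (t * ((i:ℝ)+1) * (μ.rowLen i : ℝ)
              + (n:ℝ) * (-Real.log (1 - Real.exp (-(t * ((i:ℝ)+1)))))) := by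
      refine Finset.prod_le_prod (fun i _ => by positivity) (fun i _ => ?_)
      exact Stmt8Aux.row_bound n (μ.rowLen i) hn1 (t := t * ((i:ℝ)+1)) (by positivity)
    have h3 : ∏ i ∈ Finset.range c0,
        Real.exp (t * ((i:ℝ)+1) * (μ.rowLen i : ℝ)
          + (n:ℝ) * (-Real.log (1 - Real.exp (-(t * ((i:ℝ)+1))))))
        = Real.exp (∑ i ∈ Finset.range c0,
            (t * ((i:ℝ)+1) * (μ.rowLen i : ℝ)
              + (n:ℝ) * (-Real.log (1 - Real.exp (-(t * ((i:ℝ)+1))))))) :=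
      (Real.exp_sum _ _).symm
    have hsumW : ∑ i ∈ Finset.range c0, ((i:ℝ)+1) * (μ.rowLen i : ℝ) = (W:ℝ) := by
      rw [hWdef, ← Stmt8Aux.weight_eq μ, ← hc0def]
      push_cast
      ring
    have h4 : ∑ i ∈ Finset.range c0,
        (t * ((i:ℝ)+1) * (μ.rowLen i : ℝ)
          + (n:ℝ) * (-Real.log (1 - Real.exp (-(t * ((i:ℝ)+1))))))
        ≤ t * (W:ℝ) + (n:ℝ) * (8 / t) := by
      rw [Finset.sum_add_distrib]
      have ha : ∑ i ∈ Finset.range c0, t * ((i:ℝ)+1) * (μ.rowLen i : ℝ) = t * (W:ℝ) := by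
        rw [← hsumW, Finset.mul_sum]
        exact Finset.sum_congr rfl fun i _ => by ring
      have hb : ∑ i ∈ Finset.range c0,
          (n:ℝ) * (-Real.log (1 - Real.exp (-(t * ((i:ℝ)+1))))) ≤ (n:ℝ) * (8 / t) := by
        rw [← Finset.mul_sum]
        exact mul_le_mul_of_nonneg_left (Stmt8Aux.sum_f_le t ht c0) (by linarith)
      rw [ha]
      linarith
    have hfinal : t * (W:ℝ) + (n:ℝ) * (8 / t) ≤ 10 * Real.sqrt ε * n := by
      have hWne : Real.sqrt (W:ℝ) ≠ 0 := ne_of_gt hsW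
      have hnne : Real.sqrt (n:ℝ) ≠ 0 := ne_of_gt hsn
      have e1 : t * (W:ℝ) = Real.sqrt (n:ℝ) * Real.sqrt (W:ℝ) := by
        calc t * (W:ℝ) = Real.sqrt (n:ℝ) * ((W:ℝ) / Real.sqrt (W:ℝ)) := by
              rw [ht_def]; ring
          _ = Real.sqrt (n:ℝ) * Real.sqrt (W:ℝ) := by rw [Real.div_sqrt]
      have hnn : Real.sqrt (n:ℝ) * Real.sqrt (n:ℝ) = (n:ℝ) :=
        Real.mul_self_sqrt hnpos.le
      have e2 : (n:ℝ) * (8 / t) = 8 * (Real.sqrt (n:ℝ) * Real.sqrt (W:ℝ)) := by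
        have h8 : (n:ℝ) * (8 / t) = 8 * (((n:ℝ) / Real.sqrt (n:ℝ)) * Real.sqrt (W:ℝ)) := by
          rw [ht_def]
          field_simp
        rw [h8, Real.div_sqrt]
      have hsqW : Real.sqrt (W:ℝ) ≤ Real.sqrt ε * Real.sqrt (n:ℝ) := by
        rw [← Real.sqrt_mul hε.le]
        exact Real.sqrt_le_sqrt hw.le
      have h9 : Real.sqrt (n:ℝ) * Real.sqrt (W:ℝ) ≤ Real.sqrt ε * (n:ℝ) := by
        calc Real.sqrt (n:ℝ) * Real.sqrt (W:ℝ)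
            ≤ Real.sqrt (n:ℝ) * (Real.sqrt ε * Real.sqrt (n:ℝ)) :=
              mul_le_mul_of_nonneg_left hsqW hsn.le
          _ = Real.sqrt ε * (Real.sqrt (n:ℝ) * Real.sqrt (n:ℝ)) := by ring
          _ = Real.sqrt ε * (n:ℝ) := by rw [hnn]
      have hsε : 0 ≤ Real.sqrt ε * (n:ℝ) := by positivity
      calc t * (W:ℝ) + (n:ℝ) * (8 / t)
          = 9 * (Real.sqrt (n:ℝ) * Real.sqrt (W:ℝ)) := by rw [e1, e2]; ring
        _ ≤ 9 * (Real.sqrt ε * (n:ℝ)) := by linarith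
        _ ≤ 10 * Real.sqrt ε * (n:ℝ) := by linarith
    calc (ssytCount μ n : ℝ)
        ≤ ∏ i ∈ Finset.range c0, (((n - 1 + μ.rowLen i).choose (μ.rowLen i) : ℕ) : ℝ) := h1
      _ ≤ ∏ i ∈ Finset.range c0,
            Real.exp (t * ((i:ℝ)+1) * (μ.rowLen i : ℝ)
              + (n:ℝ) * (-Real.log (1 - Real.exp (-(t * ((i:ℝ)+1)))))) := h2
      _ = Real.exp (∑ i ∈ Finset.range c0,
            (t * ((i:ℝ)+1) * (μ.rowLen i : ℝ)
              + (n:ℝ) * (-Real.log (1 - Real.exp (-(t * ((i:ℝ)+1))))))) := h3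
      _ ≤ Real.exp (10 * Real.sqrt ε * n) := Real.exp_le_exp.2 (h4.trans hfinal)
end

section
/- Let μ be a probability measure on a finite abelian group R, and define ν by ν(t) = γ (μ * μ⁻)(t) for t ≠ 0 and ν(0) = 1 − Σ_{s≠0} ν(s), where γ = 1/8 and μ⁻(t) = μ(−t). Then ν is a probability measure, its Fourier transform satisfies ν̂(χ) = 1 − γ + γ|μ̂(χ)|² for every character χ, in particular ν̂ is real and ν̂ > 1 − 2γ, and if μ has min-entropy α then ν has min-entropy at least γα. -/
open scoped BigOperators

/-- The symmetrized lazy distribution `ν`: `ν(t) = (1/8)(μ * μ⁻)(t)` for `t ≠ 0` and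
`ν(0) = 1 - Σ_{s ≠ 0} ν(s)`, where `(μ * μ⁻)(t) = Σ_s μ(s)μ(s - t)`. -/
noncomputable def lazyMeasure {R : Type*} [AddCommGroup R] [Fintype R] [DecidableEq R]
    (μ : R → ℝ) : R → ℝ := fun t =>
  if t = 0 then
    1 - ∑ s ∈ Finset.univ.filter (fun s : R => s ≠ 0),
      (1 / 8 : ℝ) * ∑ u, μ u * μ (u - s)
  else (1 / 8 : ℝ) * ∑ u, μ u * μ (u - t)

/-- `ν` is a probability measure with real Fourier transform
`ν̂ = 1 - γ + γ|μ̂|² > 1 - 2γ` (`γ = 1/8`), and `ν` has min-entropy at least `α/8` if `μ`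
has min-entropy `α`. -/
theorem stmt_13 {R : Type*} [AddCommGroup R] [Fintype R] [DecidableEq R]
    (μ : R → ℝ) (hμ0 : ∀ t, 0 ≤ μ t) (hμ1 : ∑ t, μ t = 1)
    (α : ℝ) (hα0 : 0 < α) (hα1 : α < 1) (hent : ∀ t, μ t ≤ 1 - α) :
    (∀ t, 0 ≤ lazyMeasure μ t) ∧
    (∑ t, lazyMeasure μ t = 1) ∧
    (∀ χ : AddChar R ℂ,
      ∑ t, (lazyMeasure μ t : ℂ) * χ t
        = 1 - (1 / 8 : ℂ) + (1 / 8 : ℂ) * ‖∑ t, (μ t : ℂ) * χ t‖ ^ 2) ∧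
    (∀ χ : AddChar R ℂ, (∑ t, (lazyMeasure μ t : ℂ) * χ t).im = 0) ∧
    (∀ χ : AddChar R ℂ, (1 - 2 * (1 / 8 : ℝ)) < (∑ t, (lazyMeasure μ t : ℂ) * χ t).re) ∧
    (∀ t, lazyMeasure μ t ≤ 1 - α / 8) := by
  set c : R → ℝ := fun t => ∑ u, μ u * μ (u - t) with hc
  have hc0 : ∀ t, 0 ≤ c t := fun t =>
    Finset.sum_nonneg fun u _ => mul_nonneg (hμ0 u) (hμ0 _)
  have hcle : ∀ t, c t ≤ 1 - α := by
    intro t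
    calc c t ≤ ∑ u, μ u * (1 - α) :=
          Finset.sum_le_sum fun u _ => mul_le_mul_of_nonneg_left (hent _) (hμ0 u)
    _ = 1 - α := by rw [← Finset.sum_mul, hμ1, one_mul]
  have hcsum : ∑ t, c t = 1 := by
    rw [hc]
    rw [Finset.sum_comm]
    have : ∀ u : R, ∑ t, μ u * μ (u - t) = μ u := by
      intro u
      rw [← Finset.mul_sum]
      have : ∑ t, μ (u - t) = 1 := by
        rw [← hμ1]
        exact Fintype.sum_equiv (Equiv.subLeft u) _ _ (fun t => rfl)
      rw [this, mul_one]
    simp only [this, hμ1]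
  have hne : ∀ t : R, t ≠ 0 → lazyMeasure μ t = 1 / 8 * c t := by
    intro t ht; simp only [lazyMeasure, if_neg ht]; rfl
  have hsplit : ∑ s ∈ Finset.univ.filter (fun s : R => s ≠ 0),
      (1 / 8 : ℝ) * c s = 1 / 8 * (1 - c 0) := by
    rw [Finset.filter_ne', ← Finset.mul_sum,
      Finset.sum_erase_eq_sub (Finset.mem_univ (0 : R)), hcsum]
  have h0 : lazyMeasure μ 0 = 1 - 1 / 8 * (1 - c 0) := by
    rw [← hsplit]; exact if_pos rfl
  have hnonneg : ∀ t, 0 ≤ lazyMeasure μ t := by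
    intro t
    by_cases ht : t = 0
    · subst ht; rw [h0]
      nlinarith [hc0 0, hcle 0]
    · rw [hne t ht]; nlinarith [hc0 t]
  have hsum : ∑ t, lazyMeasure μ t = 1 := by
    rw [← Finset.add_sum_erase _ _ (Finset.mem_univ (0 : R)), h0]
    have : ∑ t ∈ Finset.univ.erase (0 : R), lazyMeasure μ t
        = ∑ t ∈ Finset.univ.erase (0 : R), 1 / 8 * c t :=
      Finset.sum_congr rfl fun t ht => hne t (Finset.ne_of_mem_erase ht)
    rw [this, ← Finset.mul_sum, Finset.sum_erase_eq_sub (Finset.mem_univ (0 : R)), hcsum]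
    ring
  have hcft : ∀ χ : AddChar R ℂ, ∑ t, (c t : ℂ) * χ t
      = ((‖∑ t, (μ t : ℂ) * χ t‖ : ℝ) : ℂ) ^ 2 := by
    intro χ
    have step1 : ∑ t, (c t : ℂ) * χ t
        = ∑ u, ∑ v, ((μ u : ℂ) * χ u) * ((μ v : ℂ) * (starRingEnd ℂ) (χ v)) := by
      simp only [hc]
      push_cast
      simp only [Finset.sum_mul]
      rw [Finset.sum_comm]
      refine Finset.sum_congr rfl fun u _ => ?_
      refine (Fintype.sum_equiv (Equiv.subLeft u) _ _ fun v => ?_).symm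
      simp only [Equiv.subLeft_apply, sub_sub_cancel]
      have : χ (u - v) = χ u * (starRingEnd ℂ) (χ v) := by
        rw [sub_eq_add_neg, AddChar.map_add_eq_mul, AddChar.map_neg_eq_conj]
      rw [this]
      ring
    rw [step1, ← Finset.sum_mul_sum]
    have : ∑ v, (μ v : ℂ) * (starRingEnd ℂ) (χ v)
        = (starRingEnd ℂ) (∑ v, (μ v : ℂ) * χ v) := by
      rw [map_sum]
      exact Finset.sum_congr rfl fun v _ => by rw [map_mul, Complex.conj_ofReal]
    rw [this, Complex.mul_conj, ← Complex.sq_norm]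
    push_cast
    ring
  have hft : ∀ χ : AddChar R ℂ, ∑ t, (lazyMeasure μ t : ℂ) * χ t
      = 1 - (1 / 8 : ℂ) + (1 / 8 : ℂ) * ‖∑ t, (μ t : ℂ) * χ t‖ ^ 2 := by
    intro χ
    rw [← Finset.add_sum_erase _ _ (Finset.mem_univ (0 : R)), h0]
    have : ∑ t ∈ Finset.univ.erase (0 : R), (lazyMeasure μ t : ℂ) * χ t
        = ∑ t ∈ Finset.univ.erase (0 : R), (1 / 8 : ℂ) * ((c t : ℂ) * χ t) := by
      refine Finset.sum_congr rfl fun t ht => ?_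
      rw [hne t (Finset.ne_of_mem_erase ht)]
      push_cast
      ring
    rw [this, ← Finset.mul_sum, Finset.sum_erase_eq_sub (Finset.mem_univ (0 : R)), hcft χ]
    simp only [AddChar.map_zero_eq_one, mul_one]
    push_cast
    ring
  have hreal : ∀ χ : AddChar R ℂ, ∑ t, (lazyMeasure μ t : ℂ) * χ t
      = ((1 - 1 / 8 + 1 / 8 * ‖∑ t, (μ t : ℂ) * χ t‖ ^ 2 : ℝ) : ℂ) := by
    intro χ
    rw [hft χ]
    push_cast
    ring
  refine ⟨hnonneg, hsum, hft, ?_, ?_, ?_⟩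
  · intro χ
    rw [hreal χ, Complex.ofReal_im]
  · intro χ
    rw [hreal χ, Complex.ofReal_re]
    have : (0:ℝ) ≤ ‖∑ t, (μ t : ℂ) * χ t‖ := norm_nonneg _
    nlinarith
  · intro t
    by_cases ht : t = 0
    · subst ht; rw [h0]
      nlinarith [hcle 0]
    · rw [hne t ht]
      nlinarith [hc0 t, hcle t]
end

section
/- Let μ be a probability measure on a finite abelian group with ν̂(t) = 1 − γ + γ|μ̂(t)|², γ = 1/8. Then for all characters s, t: |μ̂(t) μ̂(s)| ≤ ν̂(t + s)². -/
open Finset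

/-- Pointwise: for unit complex numbers `a, b`,
`1 - re(ab) ≤ 2(1 - re a) + 2(1 - re b)`. -/
lemma ptwise {a b : ℂ} (ha : ‖a‖ = 1) (hb : ‖b‖ = 1) :
    1 - (a * b).re ≤ 2 * (1 - a.re) + 2 * (1 - b.re) := by
  have ha' : a.re * a.re + a.im * a.im = 1 := by
    have h : Complex.normSq a = 1 := by
      rw [Complex.normSq_eq_norm_sq, ha]; norm_num
    rwa [Complex.normSq_apply] at h
  have hb' : b.re * b.re + b.im * b.im = 1 := by
    have h : Complex.normSq b = 1 := by
      rw [Complex.normSq_eq_norm_sq, hb]; norm_num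
    rwa [Complex.normSq_apply] at h
  simp only [Complex.mul_re]
  nlinarith [sq_nonneg (a.im - b.im), sq_nonneg (a.im + b.im), sq_nonneg (a.re - b.re),
    sq_nonneg (a.re + b.re - 2), sq_nonneg (a.re - 1), sq_nonneg (b.re - 1)]

lemma exists_unit (z : ℂ) : ∃ c : ℂ, ‖c‖ = 1 ∧ c * z = (‖z‖ : ℝ) := by
  rcases eq_or_ne z 0 with rfl | hz
  · exact ⟨1, by simp⟩
  · refine ⟨(starRingEnd ℂ) z / (‖z‖ : ℂ), ?_, ?_⟩
    · simp [hz]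
    · have hA : ((‖z‖ : ℝ) : ℂ) ≠ 0 := by
        simpa using hz
      have h : (starRingEnd ℂ) z * z = ((‖z‖ : ℝ) : ℂ) ^ 2 := by
        rw [mul_comm, Complex.mul_conj]
        norm_cast
        exact (Complex.sq_norm z).symm
      rw [div_mul_eq_mul_div, h]
      field_simp

/-- Key spectral inequality: `1 - |μ̂(ts)| ≤ 2(1-|μ̂ t|) + 2(1-|μ̂ s|)`. -/
lemma key {R : Type*} [AddCommGroup R] [Fintype R]
    (μ : R → ℝ) (hμ0 : ∀ x, 0 ≤ μ x) (hμ1 : ∑ x, μ x = 1)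
    (t s : AddChar R ℂ) :
    1 - ‖∑ x, (μ x : ℂ) * (t * s) x‖
      ≤ 2 * (1 - ‖∑ x, (μ x : ℂ) * t x‖)
        + 2 * (1 - ‖∑ x, (μ x : ℂ) * s x‖) := by
  obtain ⟨c₁, hc₁, hc₁'⟩ := exists_unit (∑ x, (μ x : ℂ) * t x)
  obtain ⟨c₂, hc₂, hc₂'⟩ := exists_unit (∑ x, (μ x : ℂ) * s x)
  have habs : ∀ x : R, ‖t x‖ = 1 := fun x => t.norm_apply x
  have habs' : ∀ x : R, ‖s x‖ = 1 := fun x => s.norm_apply x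
  have hre : ((c₁ * c₂) * ∑ x, (μ x : ℂ) * (t * s) x).re
      ≤ ‖∑ x, (μ x : ℂ) * (t * s) x‖ := by
    calc ((c₁ * c₂) * ∑ x, (μ x : ℂ) * (t * s) x).re
        ≤ ‖(c₁ * c₂) * ∑ x, (μ x : ℂ) * (t * s) x‖ := Complex.re_le_norm _
      _ = ‖∑ x, (μ x : ℂ) * (t * s) x‖ := by
          rw [norm_mul, norm_mul, hc₁, hc₂, one_mul, one_mul]
  -- expand the real part as a sum
  have hsum : ((c₁ * c₂) * ∑ x, (μ x : ℂ) * (t * s) x).re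
      = ∑ x, μ x * ((c₁ * t x) * (c₂ * s x)).re := by
    rw [Finset.mul_sum, Complex.re_sum]
    refine Finset.sum_congr rfl fun x _ => ?_
    have : (c₁ * c₂) * ((μ x : ℂ) * (t * s) x) = (μ x : ℂ) * ((c₁ * t x) * (c₂ * s x)) := by
      simp [AddChar.mul_apply]; ring
    rw [this, Complex.re_ofReal_mul]
  have h1 : ‖∑ x, (μ x : ℂ) * t x‖
      = ∑ x, μ x * (c₁ * t x).re := by
    have : ((‖∑ x, (μ x : ℂ) * t x‖ : ℝ) : ℂ).re
        = ∑ x, μ x * (c₁ * t x).re := by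
      rw [← hc₁', Finset.mul_sum, Complex.re_sum]
      refine Finset.sum_congr rfl fun x _ => ?_
      rw [show c₁ * ((μ x : ℂ) * t x) = (μ x : ℂ) * (c₁ * t x) by ring, Complex.re_ofReal_mul]
    simpa using this
  have h2 : ‖∑ x, (μ x : ℂ) * s x‖
      = ∑ x, μ x * (c₂ * s x).re := by
    have : ((‖∑ x, (μ x : ℂ) * s x‖ : ℝ) : ℂ).re
        = ∑ x, μ x * (c₂ * s x).re := by
      rw [← hc₂', Finset.mul_sum, Complex.re_sum]
      refine Finset.sum_congr rfl fun x _ => ?_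
      rw [show c₂ * ((μ x : ℂ) * s x) = (μ x : ℂ) * (c₂ * s x) by ring, Complex.re_ofReal_mul]
    simpa using this
  have hpt : ∀ x : R, μ x * (1 - ((c₁ * t x) * (c₂ * s x)).re)
      ≤ μ x * (2 * (1 - (c₁ * t x).re) + 2 * (1 - (c₂ * s x).re)) := by
    intro x
    apply mul_le_mul_of_nonneg_left _ (hμ0 x)
    exact ptwise (by rw [norm_mul, hc₁, habs x, one_mul]) (by rw [norm_mul, hc₂, habs' x, one_mul])
  have hsum2 : ∑ x, μ x * (1 - ((c₁ * t x) * (c₂ * s x)).re)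
      ≤ ∑ x, μ x * (2 * (1 - (c₁ * t x).re) + 2 * (1 - (c₂ * s x).re)) :=
    Finset.sum_le_sum fun x _ => hpt x
  have expand1 : ∑ x, μ x * (1 - ((c₁ * t x) * (c₂ * s x)).re)
      = 1 - ((c₁ * c₂) * ∑ x, (μ x : ℂ) * (t * s) x).re := by
    rw [hsum]
    simp only [mul_sub, mul_one]
    rw [Finset.sum_sub_distrib, hμ1]
  have expand2 : ∑ x, μ x * (2 * (1 - (c₁ * t x).re) + 2 * (1 - (c₂ * s x).re))
      = 2 * (1 - ‖∑ x, (μ x : ℂ) * t x‖)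
        + 2 * (1 - ‖∑ x, (μ x : ℂ) * s x‖) := by
    have e : ∑ x, μ x * (2 * (1 - (c₁ * t x).re) + 2 * (1 - (c₂ * s x).re))
        = 4 * (∑ x, μ x) - 2 * (∑ x, μ x * (c₁ * t x).re)
          - 2 * (∑ x, μ x * (c₂ * s x).re) := by
      rw [Finset.mul_sum, Finset.mul_sum, Finset.mul_sum, ← Finset.sum_sub_distrib,
        ← Finset.sum_sub_distrib]
      exact Finset.sum_congr rfl fun x _ => by ring
    rw [e, hμ1, h1, h2]; ring
  rw [expand1, expand2] at hsum2
  linarith [hre]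

/-- With `ν̂ = 7/8 + |μ̂|²/8`, one has `|μ̂(t)μ̂(s)| ≤ ν̂(t + s)²` for all characters
`s, t` (the sum `t + s` in the dual group being the pointwise product of characters). -/
theorem stmt_15 {R : Type*} [AddCommGroup R] [Fintype R]
    (μ : R → ℝ) (hμ0 : ∀ x, 0 ≤ μ x) (hμ1 : ∑ x, μ x = 1)
    (t s : AddChar R ℂ) :
    ‖(∑ x, (μ x : ℂ) * t x) * (∑ x, (μ x : ℂ) * s x)‖
      ≤ ((7 / 8 : ℝ) + ‖∑ x, (μ x : ℂ) * (t * s) x‖ ^ 2 / 8) ^ 2 := by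
  set a := ‖∑ x, (μ x : ℂ) * t x‖ with ha
  set b := ‖∑ x, (μ x : ℂ) * s x‖ with hb
  set d := ‖∑ x, (μ x : ℂ) * (t * s) x‖ with hd
  have hbound : ∀ (ψ : AddChar R ℂ), ‖∑ x, (μ x : ℂ) * ψ x‖ ≤ 1 := by
    intro ψ
    calc ‖∑ x, (μ x : ℂ) * ψ x‖ ≤ ∑ x, ‖(μ x : ℂ) * ψ x‖ := by
          exact norm_sum_le Finset.univ (fun x => (μ x : ℂ) * ψ x)
      _ = ∑ x, μ x := by
          refine Finset.sum_congr rfl fun x _ => ?_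
          rw [norm_mul, ψ.norm_apply, mul_one]
          simp [abs_of_nonneg (hμ0 x)]
      _ = 1 := hμ1
  have ha1 : a ≤ 1 := hbound t
  have hb1 : b ≤ 1 := hbound s
  have hd1 : d ≤ 1 := hbound (t * s)
  have ha0 : 0 ≤ a := norm_nonneg _
  have hb0 : 0 ≤ b := norm_nonneg _
  have hd0 : 0 ≤ d := norm_nonneg _
  have hkey : 1 - d ≤ 2 * (1 - a) + 2 * (1 - b) := key μ hμ0 hμ1 t s
  rw [norm_mul]
  rcases le_or_gt (1/4 : ℝ) ((1 - a) + (1 - b)) with h | h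
  · -- a*b ≤ ((a+b)/2)^2 ≤ (7/8)^2 ≤ RHS
    nlinarith [sq_nonneg (a - b), sq_nonneg d, sq_nonneg (d^2)]
  · -- d ≥ 2a + 2b - 3 ≥ 1/2
    have hdge : 2*a + 2*b - 3 ≤ d := by linarith
    have hu : (1:ℝ)/2 ≤ 2*a + 2*b - 3 := by linarith
    nlinarith [sq_nonneg (a - b), sq_nonneg (d - (2*a+2*b-3)), sq_nonneg (2*a+2*b-4),
      mul_nonneg (sub_nonneg.2 hdge) (sub_nonneg.2 hdge), sq_nonneg (d - 1),
      mul_nonneg (mul_nonneg hd0 hd0) (sub_nonneg.2 hdge)]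
end

section
/- Let R be a finite module over a commutative ring (e.g. ℤ/Nℤ), W^⊥ a fixed finite submodule isomorphism class in (R̂)^n, and ζ ∈ (R̂)^n an element of order T. Then the number of submodules N ≤ R^n with N^⊥ ≅ W^⊥ and ζ ∈ N^⊥ equals #{N : N^⊥ ≅ W^⊥} · #{ξ ∈ W^⊥ : ord(ξ) = T} / #{ξ ∈ (R̂)^n : ord(ξ) = T}, and in particular is at most (|W^⊥|^n / (|Aut W^⊥| · #{ξ ∈ (R̂)^n : ord(ξ)=T})) · #{ξ ∈ W^⊥ : ord(ξ) = T}. -/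
/-- The perpendicular submodule `N^⊥` of `N ≤ (ℤ/mℤ)^n` under the standard bilinear
pairing (identifying the dual group of `ℤ/mℤ` with `ℤ/mℤ`). -/
def zmodPerp {m n : ℕ} (N : Submodule (ZMod m) (Fin n → ZMod m)) :
    Submodule (ZMod m) (Fin n → ZMod m) where
  carrier := {ψ | ∀ v ∈ N, ∑ ℓ, ψ ℓ * v ℓ = 0}
  add_mem' := by
    intro a b ha hb v hv
    simp only [Set.mem_setOf_eq, Pi.add_apply, add_mul, Finset.sum_add_distrib] at *
    rw [ha v hv, hb v hv, add_zero]
  zero_mem' := by intro v hv; simp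
  smul_mem' := by
    intro c ψ h v hv
    simp only [Set.mem_setOf_eq, Pi.smul_apply, smul_eq_mul, mul_assoc,
      ← Finset.mul_sum] at *
    rw [h v hv, mul_zero]

namespace Stmt17

set_option linter.unusedSectionVars false

variable {m n : ℕ} [NeZero m]

/-- the pairing, linear in the second argument -/
def dotL (ψ : Fin n → ZMod m) : (Fin n → ZMod m) →ₗ[ZMod m] ZMod m where
  toFun v := ∑ ℓ, ψ ℓ * v ℓ
  map_add' a b := by simp [mul_add, Finset.sum_add_distrib]
  map_smul' c v := by simp [Finset.mul_sum, mul_left_comm]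

lemma dotL_apply (ψ v : Fin n → ZMod m) : dotL ψ v = ∑ ℓ, ψ ℓ * v ℓ := rfl

lemma dotL_comm (ψ v : Fin n → ZMod m) : dotL ψ v = dotL v ψ := by
  simp [dotL_apply, mul_comm]

lemma dotL_single (ψ : Fin n → ZMod m) (ℓ : Fin n) : dotL ψ (Pi.single ℓ 1) = ψ ℓ := by
  simp [dotL_apply, Pi.single_apply, mul_ite]

lemma mem_zmodPerp_iff {N : Submodule (ZMod m) (Fin n → ZMod m)} {ψ : Fin n → ZMod m} :
    ψ ∈ zmodPerp N ↔ ∀ v ∈ N, dotL ψ v = 0 := Iff.rfl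

lemma dotL_reconstruct (f : (Fin n → ZMod m) →ₗ[ZMod m] ZMod m) (v : Fin n → ZMod m) :
    dotL (fun ℓ => f (Pi.single ℓ 1)) v = f v := by
  have hv : v = ∑ ℓ, (v ℓ) • (Pi.single ℓ (1 : ZMod m) : Fin n → ZMod m) := by
    simp_rw [← Pi.single_smul, smul_eq_mul, mul_one]
    exact (Finset.univ_sum_single v).symm
  conv_rhs => rw [hv]
  rw [map_sum]
  simp [dotL_apply, map_smul, smul_eq_mul, mul_comm]

lemma eq_of_dotL_eq {w w' : Fin n → ZMod m} (h : ∀ ψ, dotL ψ w = dotL ψ w') : w = w' := by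
  funext ℓ
  have := h (Pi.single ℓ 1)
  rwa [dotL_comm, dotL_single, dotL_comm (Pi.single ℓ 1), dotL_single] at this


section HomCount

open scoped DirectSum

variable {m : ℕ} [NeZero m]

instance finite_addHom {A B : Type*} [AddZeroClass A] [AddZeroClass B] [Finite A] [Finite B] :
    Finite (A →+ B) :=
  Finite.of_injective (fun f : A →+ B => (f : A → B)) DFunLike.coe_injective

lemma card_torsion_le (q : ℕ) (hq : q ≠ 0) :
    Nat.card {x : ZMod m // q • x = 0} ≤ q := by
  have hmpos : 0 < m := Nat.pos_of_ne_zero (NeZero.ne m)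
  have key : ∀ x : {x : ZMod m // q • x = 0}, m ∣ q * (x : ZMod m).val := by
    rintro ⟨x, hx⟩
    have : ((q * x.val : ℕ) : ZMod m) = 0 := by
      push_cast
      rw [ZMod.natCast_val, ZMod.cast_id, ← nsmul_eq_mul, hx]
    exact (ZMod.natCast_eq_zero_iff _ _).mp this
  have hinj : Function.Injective (fun x : {x : ZMod m // q • x = 0} =>
      (⟨q * (x : ZMod m).val / m, by
        rw [Nat.div_lt_iff_lt_mul hmpos]
        exact mul_lt_mul_of_pos_left (ZMod.val_lt _) (Nat.pos_of_ne_zero hq)⟩ : Fin q)) := by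
    intro x y hxy
    have hx := key x
    have hy := key y
    have h1 : q * (x : ZMod m).val = q * (y : ZMod m).val := by
      have := congrArg (fun z : Fin q => (z : ℕ) * m) hxy
      simpa [Nat.div_mul_cancel hx, Nat.div_mul_cancel hy] using this
    exact Subtype.ext (ZMod.val_injective _ (Nat.eq_of_mul_eq_mul_left
      (Nat.pos_of_ne_zero hq) h1))
  simpa using Nat.card_le_card_of_injective _ hinj

lemma card_addHom_cyclic_le (q : ℕ) (hq : q ≠ 0) :
    Nat.card (ZMod q →+ ZMod m) ≤ q := by
  haveI : NeZero q := ⟨hq⟩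
  refine le_trans (Nat.card_le_card_of_injective
    (fun φ : ZMod q →+ ZMod m => (⟨φ 1, by
      rw [← map_nsmul]
      have hq0 : (q : ZMod q) = 0 := ZMod.natCast_self q
      rw [show q • (1 : ZMod q) = 0 by simp [hq0], map_zero]⟩ :
      {x : ZMod m // q • x = 0})) ?_) (card_torsion_le q hq)
  intro φ ψ h
  have h1 : φ 1 = ψ 1 := congrArg Subtype.val h
  ext x
  have hx : x = x.val • (1 : ZMod q) := by
    rw [nsmul_eq_mul, mul_one]
    exact (ZMod.natCast_rightInverse x).symm
  rw [hx, map_nsmul, map_nsmul, h1]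

lemma card_addHom_le (M : Type*) [AddCommGroup M] [Finite M] :
    Nat.card (M →+ ZMod m) ≤ Nat.card M := by
  classical
  obtain ⟨ι, hι, p, hp, e, ⟨eqv⟩⟩ := AddCommGroup.equiv_directSum_zmod_of_finite M
  set q : ι → ℕ := fun i => p i ^ e i with hq
  have hqne : ∀ i, q i ≠ 0 := fun i => pow_ne_zero _ (hp i).ne_zero
  haveI : ∀ i, NeZero (q i) := fun i => ⟨hqne i⟩
  have e1 : (M →+ ZMod m) ≃ ((⨁ i, ZMod (q i)) →+ ZMod m) :=
    { toFun := fun f => f.comp eqv.symm.toAddMonoidHom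
      invFun := fun f => f.comp eqv.toAddMonoidHom
      left_inv := fun f => by ext x; simp
      right_inv := fun f => by ext x; simp }
  have e2 : Function.Injective (fun (f : (⨁ i, ZMod (q i)) →+ ZMod m)
      (i : ι) => f.comp (DirectSum.of (fun i => ZMod (q i)) i)) := by
    intro f g h
    refine DirectSum.addHom_ext fun i x => ?_
    exact DFunLike.congr_fun (congrFun h i) x
  have hcardM : Nat.card M = ∏ i, q i := by
    rw [Nat.card_congr (eqv.toEquiv.trans (DFinsupp.equivFunOnFintype)), Nat.card_pi]
    simp [Nat.card_zmod]
    rfl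
  haveI : ∀ i, Finite (ZMod (q i) →+ ZMod m) := fun i => finite_addHom
  calc Nat.card (M →+ ZMod m)
      = Nat.card ((⨁ i, ZMod (q i)) →+ ZMod m) := Nat.card_congr e1
    _ ≤ Nat.card (∀ i, ZMod (q i) →+ ZMod m) := Nat.card_le_card_of_injective _ e2
    _ ≤ ∏ i, q i := by
        rw [Nat.card_pi]
        exact Finset.prod_le_prod (fun _ _ => Nat.zero_le _)
          (fun i _ => card_addHom_cyclic_le _ (hqne i))
    _ = Nat.card M := hcardM.symm

lemma card_linearMap_le (M : Type*) [AddCommGroup M] [Module (ZMod m) M] [Finite M] :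
    Nat.card (M →ₗ[ZMod m] ZMod m) ≤ Nat.card M :=
  haveI : Finite (M →+ ZMod m) := finite_addHom
  le_trans (Nat.card_le_card_of_injective
    (fun f : M →ₗ[ZMod m] ZMod m => f.toAddMonoidHom)
    (fun f g h => LinearMap.ext fun x => DFunLike.congr_fun h x)) (card_addHom_le M)

end HomCount

section Perp

variable {m n : ℕ} [NeZero m]

local notation "V" => Fin n → ZMod m

/-- perp as linear maps vanishing on N -/
def perpEquivVanishing (N : Submodule (ZMod m) V) :
    zmodPerp N ≃ {f : V →ₗ[ZMod m] ZMod m // ∀ v ∈ N, f v = 0} where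
  toFun ψ := ⟨dotL ψ.1, ψ.2⟩
  invFun f := ⟨fun ℓ => f.1 (Pi.single ℓ 1), by
    intro v hv
    show dotL (fun ℓ => f.1 (Pi.single ℓ 1)) v = 0
    rw [dotL_reconstruct]
    exact f.2 v hv⟩
  left_inv ψ := by
    apply Subtype.ext
    funext ℓ
    exact dotL_single ψ.1 ℓ
  right_inv f := by
    apply Subtype.ext
    apply LinearMap.ext
    intro v
    exact dotL_reconstruct f.1 v

def vanishingEquivQuot (N : Submodule (ZMod m) V) :
    {f : V →ₗ[ZMod m] ZMod m // ∀ v ∈ N, f v = 0} ≃ ((V ⧸ N) →ₗ[ZMod m] ZMod m) where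
  toFun f := N.liftQ f.1 (fun v hv => f.2 v hv)
  invFun g := ⟨g.comp N.mkQ, by
    intro v hv
    have : N.mkQ v = 0 := (Submodule.Quotient.mk_eq_zero N).mpr hv
    simp [this]⟩
  left_inv f := by
    apply Subtype.ext
    apply LinearMap.ext
    intro v
    simp
    exact Submodule.liftQ_apply _ _ _
  right_inv g := by
    refine Submodule.linearMap_qext N ?_
    apply LinearMap.ext
    intro v
    simp
    exact Submodule.liftQ_apply _ _ _

lemma card_perp_le (N : Submodule (ZMod m) V) :
    Nat.card (zmodPerp N) * Nat.card N ≤ Nat.card V := by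
  have h1 : Nat.card (zmodPerp N) = Nat.card ((V ⧸ N) →ₗ[ZMod m] ZMod m) :=
    Nat.card_congr ((perpEquivVanishing N).trans (vanishingEquivQuot N))
  have h2 : Nat.card ((V ⧸ N) →ₗ[ZMod m] ZMod m) ≤ Nat.card (V ⧸ N) :=
    card_linearMap_le _
  have h3 : Nat.card V = Nat.card N * Nat.card (V ⧸ N) :=
    Submodule.card_eq_card_quotient_mul_card N
  calc Nat.card (zmodPerp N) * Nat.card N
      ≤ Nat.card (V ⧸ N) * Nat.card N := by
        rw [h1]; exact Nat.mul_le_mul_right _ h2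
    _ = Nat.card V := by rw [h3, mul_comm]

/-- restriction map with kernel the perp -/
def restrictPairing (N : Submodule (ZMod m) V) : V →ₗ[ZMod m] (N →ₗ[ZMod m] ZMod m) where
  toFun ψ := (dotL ψ).comp N.subtype
  map_add' a b := by
    apply LinearMap.ext; intro v
    simp [dotL_apply, add_mul, Finset.sum_add_distrib]
  map_smul' c ψ := by
    apply LinearMap.ext; intro v
    simp [dotL_apply, Finset.mul_sum, mul_assoc]

lemma ker_restrictPairing (N : Submodule (ZMod m) V) :
    LinearMap.ker (restrictPairing N) = zmodPerp N := by
  ext ψ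
  constructor
  · intro h v hv
    have := DFunLike.congr_fun (show restrictPairing N ψ = 0 from h) ⟨v, hv⟩
    exact this
  · intro h
    apply LinearMap.ext
    rintro ⟨v, hv⟩
    exact h v hv

lemma card_le_perp (N : Submodule (ZMod m) V) :
    Nat.card V ≤ Nat.card N * Nat.card (zmodPerp N) := by
  have e1 : (V ⧸ zmodPerp N) ≃ₗ[ZMod m] LinearMap.range (restrictPairing N) := by
    rw [← ker_restrictPairing N]
    exact LinearMap.quotKerEquivRange _
  have h2 : Nat.card (V ⧸ zmodPerp N) ≤ Nat.card (N →ₗ[ZMod m] ZMod m) := by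
    rw [Nat.card_congr e1.toEquiv]
    haveI : Finite (N →ₗ[ZMod m] ZMod m) :=
      Finite.of_injective (fun f : N →ₗ[ZMod m] ZMod m => (f : N → ZMod m))
        DFunLike.coe_injective
    exact Nat.card_le_card_of_injective _ Subtype.val_injective
  have h3 : Nat.card (N →ₗ[ZMod m] ZMod m) ≤ Nat.card N := card_linearMap_le _
  calc Nat.card V = Nat.card (zmodPerp N) * Nat.card (V ⧸ zmodPerp N) :=
        Submodule.card_eq_card_quotient_mul_card _
    _ ≤ Nat.card N * Nat.card (zmodPerp N) := by
        rw [mul_comm]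
        exact Nat.mul_le_mul_right _ (le_trans h2 h3)

lemma card_perp_mul_card (N : Submodule (ZMod m) V) :
    Nat.card (zmodPerp N) * Nat.card N = Nat.card V :=
  le_antisymm (card_perp_le N) (by rw [mul_comm] at *; exact card_le_perp N)

lemma le_double_perp (N : Submodule (ZMod m) V) : N ≤ zmodPerp (zmodPerp N) := by
  intro v hv ψ hψ
  show dotL v ψ = 0
  rw [dotL_comm]
  exact hψ v hv

lemma double_perp (N : Submodule (ZMod m) V) : zmodPerp (zmodPerp N) = N := by
  have hle := le_double_perp N
  have hcard : Nat.card (zmodPerp (zmodPerp N)) = Nat.card N := by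
    have h1 := card_perp_mul_card N
    have h2 := card_perp_mul_card (zmodPerp N)
    have hpos : 0 < Nat.card (zmodPerp N) := Nat.card_pos
    apply Nat.eq_of_mul_eq_mul_right hpos
    rw [h2, ← h1, mul_comm]
  symm
  apply SetLike.coe_injective
  apply Set.eq_of_subset_of_ncard_le hle ?_ (Set.toFinite _)
  rw [← Nat.card_coe_set_eq, ← Nat.card_coe_set_eq]
  simpa using hcard.le

lemma zmodPerp_injective : Function.Injective (zmodPerp (m := m) (n := n)) := by
  intro N N' h
  rw [← double_perp N, ← double_perp N', h]

end Perp

section Adjoint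

variable {m n : ℕ} [NeZero m]

local notation "V" => Fin n → ZMod m

/-- the adjoint of a linear map w.r.t. the dot pairing -/
def adj (f : V →ₗ[ZMod m] V) : V →ₗ[ZMod m] V where
  toFun v := fun ℓ => dotL (f (Pi.single ℓ 1)) v
  map_add' a b := by funext ℓ; simp
  map_smul' c v := by funext ℓ; simp

lemma dotL_adj (f : V →ₗ[ZMod m] V) (ψ v : V) :
    dotL (f ψ) v = dotL ψ (adj f v) := by
  have hψ : ψ = ∑ ℓ, (ψ ℓ) • (Pi.single ℓ (1 : ZMod m) : V) := by
    simp_rw [← Pi.single_smul, smul_eq_mul, mul_one]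
    exact (Finset.univ_sum_single ψ).symm
  calc dotL (f ψ) v = dotL v (f ψ) := dotL_comm _ _
    _ = ∑ ℓ, ψ ℓ * dotL v (f (Pi.single ℓ 1)) := by
        conv_lhs => rw [hψ]
        rw [map_sum, map_sum]
        exact Finset.sum_congr rfl fun ℓ _ => by rw [map_smul, map_smul, smul_eq_mul]
    _ = ∑ ℓ, ψ ℓ * dotL (f (Pi.single ℓ 1)) v :=
        Finset.sum_congr rfl fun ℓ _ => by rw [dotL_comm v]
    _ = dotL ψ (adj f v) := rfl

/-- adjoint of an equivalence -/
def adjE (e : V ≃ₗ[ZMod m] V) : V ≃ₗ[ZMod m] V :=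
  LinearEquiv.ofLinear (adj e.toLinearMap) (adj e.symm.toLinearMap)
    (by
      apply LinearMap.ext; intro v
      apply eq_of_dotL_eq; intro ψ
      show dotL ψ (adj e.toLinearMap (adj e.symm.toLinearMap v)) = dotL ψ v
      rw [← dotL_adj, ← dotL_adj]
      simp)
    (by
      apply LinearMap.ext; intro v
      apply eq_of_dotL_eq; intro ψ
      show dotL ψ (adj e.symm.toLinearMap (adj e.toLinearMap v)) = dotL ψ v
      rw [← dotL_adj, ← dotL_adj]
      simp)

lemma dotL_adjE (e : V ≃ₗ[ZMod m] V) (ψ v : V) :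
    dotL (e ψ) v = dotL ψ (adjE e v) := dotL_adj e.toLinearMap ψ v

lemma adjE_symm (e : V ≃ₗ[ZMod m] V) (v : V) :
    (adjE e).symm v = adjE e.symm v := rfl

lemma perp_comap_adjE (e : V ≃ₗ[ZMod m] V) (N : Submodule (ZMod m) V) :
    zmodPerp (Submodule.comap (adjE e).toLinearMap N)
      = Submodule.map e.toLinearMap (zmodPerp N) := by
  ext ψ
  constructor
  · intro hψ
    refine ⟨e.symm ψ, ?_, by simp⟩
    intro w hw
    show dotL (e.symm ψ) w = 0
    have hw2 : w = adjE e ((adjE e).symm w) := (LinearEquiv.apply_symm_apply _ _).symm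
    rw [hw2, ← dotL_adjE, LinearEquiv.apply_symm_apply]
    exact hψ ((adjE e).symm w) (by
      show adjE e ((adjE e).symm w) ∈ N
      rwa [LinearEquiv.apply_symm_apply])
  · rintro ⟨φ, hφ, rfl⟩
    intro v hv
    show dotL (e φ) v = 0
    rw [dotL_adjE]
    exact hφ _ hv

end Adjoint

section Transitivity

variable {m : ℕ} [NeZero m] {n : ℕ}

/-- elementary 2x2 transformation on coordinates 0 and j -/
def elem (j : Fin (n + 1)) (hj : j ≠ 0) (p q a' b' : ZMod m)
    (h : p * a' + q * b' = 1) :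
    (Fin (n + 1) → ZMod m) ≃ₗ[ZMod m] (Fin (n + 1) → ZMod m) where
  toFun f i := if i = 0 then p * f 0 + q * f j else if i = j then a' * f j - b' * f 0 else f i
  invFun f i := if i = 0 then a' * f 0 - q * f j else if i = j then b' * f 0 + p * f j else f i
  map_add' f g := by
    funext i
    by_cases h0 : i = 0 <;> by_cases hj' : i = j <;> simp [h0, hj', hj] <;> ring
  map_smul' c f := by
    funext i
    by_cases h0 : i = 0 <;> by_cases hj' : i = j <;> simp [h0, hj', hj, smul_eq_mul] <;> ring
  left_inv f := by
    funext i
    by_cases h0 : i = 0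
    · subst h0
      simp [hj, Ne.symm hj]
      linear_combination (f 0) * h
    · by_cases hj' : i = j
      · subst hj'
        simp [hj, Ne.symm hj]
        linear_combination (f i) * h
      · simp [h0, hj']
  right_inv f := by
    funext i
    by_cases h0 : i = 0
    · subst h0
      simp [hj, Ne.symm hj]
      linear_combination (f 0) * h
    · by_cases hj' : i = j
      · subst hj'
        simp [hj, Ne.symm hj]
        linear_combination (f i) * h
      · simp [h0, hj']

lemma elem_apply_zero (j : Fin (n + 1)) (hj : j ≠ 0) (p q a' b' : ZMod m)
    (h : p * a' + q * b' = 1) (f : Fin (n + 1) → ZMod m) :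
    elem j hj p q a' b' h f 0 = p * f 0 + q * f j := by simp [elem]

lemma elem_apply_j (j : Fin (n + 1)) (hj : j ≠ 0) (p q a' b' : ZMod m)
    (h : p * a' + q * b' = 1) (f : Fin (n + 1) → ZMod m) :
    elem j hj p q a' b' h f j = a' * f j - b' * f 0 := by simp [elem, hj]

lemma elem_apply_other (j : Fin (n + 1)) (hj : j ≠ 0) (p q a' b' : ZMod m)
    (h : p * a' + q * b' = 1) (f : Fin (n + 1) → ZMod m) (i : Fin (n + 1))
    (h0 : i ≠ 0) (hij : i ≠ j) :
    elem j hj p q a' b' h f i = f i := by simp [elem, h0, hij]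

/-- kill coordinate j, moving its content into coordinate 0 -/
lemma kill (ξ : Fin (n + 1) → ZMod m) (j : Fin (n + 1)) (hj : j ≠ 0) :
    ∃ e : (Fin (n + 1) → ZMod m) ≃ₗ[ZMod m] (Fin (n + 1) → ZMod m),
      (e ξ) j = 0 ∧ ∀ i, i ≠ 0 → i ≠ j → (e ξ) i = ξ i := by
  by_cases hz : ξ j = 0
  · exact ⟨LinearEquiv.refl _ _, hz, fun i _ _ => rfl⟩
  set a : ℤ := ((ξ 0).val : ℤ) with ha
  set b : ℤ := ((ξ j).val : ℤ) with hb
  have hvne : (ξ j).val ≠ 0 := by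
    intro hv
    apply hz
    have hrw : ξ j = (((ξ j).val : ℕ) : ZMod m) := (ZMod.natCast_rightInverse (ξ j)).symm
    rw [hrw, hv, Nat.cast_zero]
  have hbne : b ≠ 0 := by rw [hb]; exact_mod_cast hvne
  have hg : (Int.gcd a b : ℤ) ≠ 0 := by
    simp only [Ne, Int.natCast_eq_zero, Int.gcd_eq_zero_iff, not_and_or]
    exact Or.inr hbne
  set g : ℤ := (Int.gcd a b : ℤ) with hgdef
  set p : ℤ := Int.gcdA a b with hp
  set q : ℤ := Int.gcdB a b with hq
  have hbez : g = a * p + b * q := Int.gcd_eq_gcd_ab a b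
  have hga : g ∣ a := Int.gcd_dvd_left a b
  have hgb : g ∣ b := Int.gcd_dvd_right a b
  set a' : ℤ := a / g with ha'
  set b' : ℤ := b / g with hb'
  have haa : a = g * a' := (Int.mul_ediv_cancel' hga).symm
  have hbb : b = g * b' := (Int.mul_ediv_cancel' hgb).symm
  have hunit : p * a' + q * b' = 1 := by
    apply mul_left_cancel₀ hg
    rw [mul_one, mul_add]
    calc g * (p * a') + g * (q * b') = a * p + b * q := by
          rw [haa, hbb]; ring
      _ = g := hbez.symm
  have hunitm : (p : ZMod m) * (a' : ZMod m) + (q : ZMod m) * (b' : ZMod m) = 1 := by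
    have := congrArg (fun z : ℤ => (z : ZMod m)) hunit
    push_cast at this
    exact this
  refine ⟨elem j hj (p : ZMod m) (q : ZMod m) (a' : ZMod m) (b' : ZMod m) hunitm, ?_, ?_⟩
  · rw [elem_apply_j]
    have hξ0 : ξ 0 = ((a : ℤ) : ZMod m) := by
      rw [ha]; push_cast; rw [ZMod.natCast_val, ZMod.cast_id]
    have hξj : ξ j = ((b : ℤ) : ZMod m) := by
      rw [hb]; push_cast; rw [ZMod.natCast_val, ZMod.cast_id]
    rw [hξ0, hξj]
    have : (a' : ZMod m) * ((b : ℤ) : ZMod m) - (b' : ZMod m) * ((a : ℤ) : ZMod m)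
        = ((a' * b - b' * a : ℤ) : ZMod m) := by push_cast; ring
    rw [this]
    have hz2 : a' * b - b' * a = 0 := by
      rw [haa, hbb]; ring
    rw [hz2, Int.cast_zero]
  · intro i h0 hij
    exact elem_apply_other _ _ _ _ _ _ _ _ _ h0 hij

/-- reduce a vector to one supported at coordinate 0 -/
lemma reduce (ξ : Fin (n + 1) → ZMod m) :
    ∃ e : (Fin (n + 1) → ZMod m) ≃ₗ[ZMod m] (Fin (n + 1) → ZMod m),
      ∀ i, i ≠ 0 → (e ξ) i = 0 := by
  suffices h : ∀ (s : Finset (Fin (n + 1))) (ξ : Fin (n + 1) → ZMod m),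
      (∀ i, i ≠ 0 → i ∉ s → ξ i = 0) →
      ∃ e : (Fin (n + 1) → ZMod m) ≃ₗ[ZMod m] (Fin (n + 1) → ZMod m),
        ∀ i, i ≠ 0 → (e ξ) i = 0 by
    exact h Finset.univ ξ (fun i _ hi => absurd (Finset.mem_univ i) hi)
  intro s
  induction s using Finset.induction_on with
  | empty =>
    intro ξ hξ
    exact ⟨LinearEquiv.refl _ _, fun i hi => hξ i hi (Finset.notMem_empty i)⟩
  | insert _ _ hjs =>
    rename_i j s ih
    intro ξ hξ
    by_cases hj : j = 0
    · refine ih ξ fun i hi his => hξ i hi ?_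
      rw [Finset.mem_insert]
      rintro (rfl | hmem)
      · exact hi hj
      · exact his hmem
    · obtain ⟨e₁, he₁j, he₁⟩ := kill ξ j hj
      obtain ⟨e₂, he₂⟩ := ih (e₁ ξ) (fun i hi his => by
        by_cases hij : i = j
        · rw [hij]; exact he₁j
        · rw [he₁ i hi hij]
          exact hξ i hi (by
            rw [Finset.mem_insert]
            rintro (rfl | hmem)
            · exact hij rfl
            · exact his hmem))
      exact ⟨e₁.trans e₂, fun i hi => by
        simpa using he₂ i hi⟩

lemma addOrderOf_equiv_apply {M N : Type*} [AddCommGroup M] [AddCommGroup N]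
    (e : M ≃+ N) (x : M) : addOrderOf (e x) = addOrderOf x :=
  addOrderOf_injective e.toAddMonoidHom e.injective x

lemma addOrderOf_single_zero (c : ZMod m) :
    addOrderOf (Pi.single (0 : Fin (n + 1)) c : Fin (n + 1) → ZMod m) = addOrderOf c := by
  exact addOrderOf_injective
    (AddMonoidHom.single (fun _ : Fin (n + 1) => ZMod m) 0)
    (fun x y hxy => Pi.single_injective 0 hxy) c

/-- every element of `ZMod m` is a unit times the gcd -/
lemma exists_unit_mul_gcd (c : ZMod m) :
    ∃ u : (ZMod m)ˣ, (u : ZMod m) * ((m.gcd c.val : ℕ) : ZMod m) = c := by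
  have hm : m ≠ 0 := NeZero.ne m
  set d : ℕ := m.gcd c.val with hd
  have hdm : d ∣ m := Nat.gcd_dvd_left _ _
  have hdc : d ∣ c.val := Nat.gcd_dvd_right _ _
  have hdpos : 0 < d := Nat.gcd_pos_of_pos_left _ (Nat.pos_of_ne_zero hm)
  set m' : ℕ := m / d with hm'
  have hm'm : m' ∣ m := Nat.div_dvd_of_dvd hdm
  have hm'pos : 0 < m' := Nat.div_pos (Nat.le_of_dvd (Nat.pos_of_ne_zero hm) hdm) hdpos
  haveI : NeZero m' := ⟨hm'pos.ne'⟩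
  set k : ℕ := c.val / d with hk
  have hcop : Nat.Coprime k m' := by
    have := Nat.coprime_div_gcd_div_gcd (m := m) (n := c.val)
      (Nat.gcd_pos_of_pos_left _ (Nat.pos_of_ne_zero hm))
    exact (Nat.Coprime.symm this)
  obtain ⟨u, hu⟩ := ZMod.unitsMap_surjective hm'm (ZMod.unitOfCoprime k hcop)
  refine ⟨u, ?_⟩
  have hcast : ((u : ZMod m).val : ZMod m') = (k : ZMod m') := by
    have h1 : ((ZMod.unitsMap hm'm u : ZMod m')) = (k : ZMod m') := by
      rw [hu, ZMod.coe_unitOfCoprime]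
    rw [ZMod.unitsMap_def] at h1
    simpa [ZMod.natCast_val] using h1
  have hmod : (u : ZMod m).val ≡ k [MOD m'] := (ZMod.natCast_eq_natCast_iff _ _ _).mp hcast
  have hmod2 : (u : ZMod m).val * d ≡ k * d [MOD m' * d] := hmod.mul_right' d
  have hmd : m' * d = m := Nat.div_mul_cancel hdm
  rw [hmd] at hmod2
  have heq : (((u : ZMod m).val * d : ℕ) : ZMod m) = ((k * d : ℕ) : ZMod m) :=
    (ZMod.natCast_eq_natCast_iff _ _ _).mpr hmod2
  have hkd : k * d = c.val := Nat.div_mul_cancel hdc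
  rw [hkd] at heq
  push_cast at heq
  rw [ZMod.natCast_val, ZMod.cast_id, ZMod.natCast_val, ZMod.cast_id] at heq
  exact heq

lemma gcd_eq_of_addOrderOf_eq {c d : ZMod m} (h : addOrderOf c = addOrderOf d) :
    m.gcd c.val = m.gcd d.val := by
  have hm : m ≠ 0 := NeZero.ne m
  have h1 : addOrderOf c = m / m.gcd c.val := by
    conv_lhs => rw [← ZMod.natCast_rightInverse c]
    exact ZMod.addOrderOf_coe _ hm
  have h2 : addOrderOf d = m / m.gcd d.val := by
    conv_lhs => rw [← ZMod.natCast_rightInverse d]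
    exact ZMod.addOrderOf_coe _ hm
  have hc : m.gcd c.val ∣ m := Nat.gcd_dvd_left _ _
  have hd : m.gcd d.val ∣ m := Nat.gcd_dvd_left _ _
  have := h1 ▸ h2 ▸ h
  calc m.gcd c.val = m / (m / m.gcd c.val) := (Nat.div_div_self hc hm).symm
    _ = m / (m / m.gcd d.val) := by rw [this]
    _ = m.gcd d.val := Nat.div_div_self hd hm

lemma exists_unit_mul_of_addOrderOf_eq {c d : ZMod m} (h : addOrderOf c = addOrderOf d) :
    ∃ u : (ZMod m)ˣ, (u : ZMod m) * c = d := by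
  obtain ⟨uc, huc⟩ := exists_unit_mul_gcd c
  obtain ⟨ud, hud⟩ := exists_unit_mul_gcd d
  refine ⟨ud * uc⁻¹, ?_⟩
  have hgcd := gcd_eq_of_addOrderOf_eq h
  push_cast
  calc (ud : ZMod m) * (uc⁻¹ : (ZMod m)ˣ) * c
      = (ud : ZMod m) * ((uc⁻¹ : (ZMod m)ˣ) * c) := by ring
    _ = (ud : ZMod m) * ((m.gcd c.val : ℕ) : ZMod m) := by
        congr 1
        conv_lhs => rw [← huc]
        rw [← mul_assoc, Units.inv_mul, one_mul]
    _ = (ud : ZMod m) * ((m.gcd d.val : ℕ) : ZMod m) := by rw [hgcd]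
    _ = d := hud

/-- scaling by a unit -/
def unitScale (u : (ZMod m)ˣ) : (Fin n → ZMod m) ≃ₗ[ZMod m] (Fin n → ZMod m) where
  toFun f i := (u : ZMod m) * f i
  invFun f i := ((u⁻¹ : (ZMod m)ˣ) : ZMod m) * f i
  map_add' f g := by funext i; simp [mul_add]
  map_smul' c f := by funext i; simp [smul_eq_mul]; ring
  left_inv f := by funext i; simp [← mul_assoc]
  right_inv f := by funext i; simp [← mul_assoc]

/-- transitivity: two vectors of equal additive order are related by an automorphism -/
lemma exists_equiv_map (ξ η : Fin n → ZMod m) (h : addOrderOf ξ = addOrderOf η) :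
    ∃ e : (Fin n → ZMod m) ≃ₗ[ZMod m] (Fin n → ZMod m), e ξ = η := by
  cases n with
  | zero => exact ⟨LinearEquiv.refl _ _, Subsingleton.elim _ _⟩
  | succ k =>
    obtain ⟨e₁, he₁⟩ := reduce ξ
    obtain ⟨e₂, he₂⟩ := reduce η
    have h1 : e₁ ξ = (Pi.single (0 : Fin (k+1)) ((e₁ ξ) 0) : Fin (k+1) → ZMod m) := by
      funext i
      by_cases hi : i = 0
      · subst hi; simp
      · rw [he₁ i hi, Pi.single_apply, if_neg hi]
    have h2 : e₂ η = (Pi.single (0 : Fin (k+1)) ((e₂ η) 0) : Fin (k+1) → ZMod m) := by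
      funext i
      by_cases hi : i = 0
      · subst hi; simp
      · rw [he₂ i hi, Pi.single_apply, if_neg hi]
    have o1 : addOrderOf (e₁ ξ) = addOrderOf ξ := addOrderOf_equiv_apply e₁.toAddEquiv ξ
    have o2 : addOrderOf (e₂ η) = addOrderOf η := addOrderOf_equiv_apply e₂.toAddEquiv η
    have ho : addOrderOf ((e₁ ξ) 0) = addOrderOf ((e₂ η) 0) := by
      rw [← addOrderOf_single_zero ((e₁ ξ) 0), ← addOrderOf_single_zero ((e₂ η) 0),
        ← h1, ← h2, o1, o2]
      exact h
    obtain ⟨u, hu⟩ := exists_unit_mul_of_addOrderOf_eq ho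
    refine ⟨e₁.trans ((unitScale u).trans e₂.symm), ?_⟩
    show e₂.symm (unitScale u (e₁ ξ)) = η
    have h3 : unitScale u (e₁ ξ) = e₂ η := by
      rw [h1, h2]
      funext i
      show (u : ZMod m) * (Pi.single (0 : Fin (k+1)) ((e₁ ξ) 0) : Fin (k+1) → ZMod m) i = _
      by_cases hi : i = 0
      · subst hi; simp [hu]
      · simp [Pi.single_apply, if_neg hi, hi]
    rw [h3, LinearEquiv.symm_apply_apply]

end Transitivity

section Assembly

variable {m n : ℕ} [NeZero m]

local notation "V" => Fin n → ZMod m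

instance : Finite (Submodule (ZMod m) V) :=
  Finite.of_injective (fun N : Submodule (ZMod m) V => (N : Set V)) SetLike.coe_injective

lemma addOrderOf_coe_submodule {P : Submodule (ZMod m) V} (x : P) :
    addOrderOf (x : V) = addOrderOf x :=
  addOrderOf_injective P.subtype.toAddMonoidHom P.injective_subtype x

lemma comap_adjE_left (e : V ≃ₗ[ZMod m] V) (N : Submodule (ZMod m) V) :
    Submodule.comap (adjE e).toLinearMap
      (Submodule.comap (adjE e.symm).toLinearMap N) = N := by
  ext x
  simp only [Submodule.mem_comap]
  have hx : (adjE e.symm) ((adjE e) x) = x := by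
    rw [← adjE_symm]; exact (adjE e).symm_apply_apply x
  rw [LinearEquiv.coe_coe, LinearEquiv.coe_coe, hx]

lemma comap_adjE_right (e : V ≃ₗ[ZMod m] V) (N : Submodule (ZMod m) V) :
    Submodule.comap (adjE e.symm).toLinearMap
      (Submodule.comap (adjE e).toLinearMap N) = N := by
  ext x
  simp only [Submodule.mem_comap]
  have hx : (adjE e) ((adjE e.symm) x) = x := by
    rw [← adjE_symm]; exact (adjE e).apply_symm_apply x
  rw [LinearEquiv.coe_coe, LinearEquiv.coe_coe, hx]

lemma cond_comap (e : V ≃ₗ[ZMod m] V) (N W : Submodule (ZMod m) V)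
    (h : Nonempty (zmodPerp N ≃ₗ[ZMod m] zmodPerp W)) :
    Nonempty (zmodPerp (Submodule.comap (adjE e).toLinearMap N) ≃ₗ[ZMod m] zmodPerp W) := by
  obtain ⟨iso⟩ := h
  exact ⟨((LinearEquiv.ofSubmodules e (zmodPerp N)
    (zmodPerp (Submodule.comap (adjE e).toLinearMap N))
    (perp_comap_adjE e N).symm).symm).trans iso⟩

lemma mem_perp_comap (e : V ≃ₗ[ZMod m] V) (N : Submodule (ZMod m) V) (x : V) :
    e x ∈ zmodPerp (Submodule.comap (adjE e).toLinearMap N) ↔ x ∈ zmodPerp N := by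
  rw [perp_comap_adjE, Submodule.mem_map_equiv, LinearEquiv.symm_apply_apply]

lemma part1 (T : ℕ) (W : Submodule (ZMod m) V) (ζ : V) (hζ : addOrderOf ζ = T) :
    Nat.card {N : Submodule (ZMod m) V //
          Nonempty (zmodPerp N ≃ₗ[ZMod m] zmodPerp W) ∧ ζ ∈ zmodPerp N}
        * Nat.card {ξ : V // addOrderOf ξ = T}
      = Nat.card {N : Submodule (ZMod m) V //
            Nonempty (zmodPerp N ≃ₗ[ZMod m] zmodPerp W)}
          * Nat.card {ξ : V // ξ ∈ zmodPerp W ∧ addOrderOf ξ = T} := by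
  classical
  have φ : ∀ N : {N : Submodule (ZMod m) V // Nonempty (zmodPerp N ≃ₗ[ZMod m] zmodPerp W)},
      zmodPerp N.1 ≃ₗ[ZMod m] zmodPerp W := fun N => Classical.choice N.2
  have hEx : ∀ ξ : {ξ : V // addOrderOf ξ = T},
      ∃ e : V ≃ₗ[ZMod m] V, e ζ = ξ.1 :=
    fun ξ => exists_equiv_map ζ ξ.1 (by rw [hζ, ξ.2])
  choose E hE using hEx
  have E1 : {p : Submodule (ZMod m) V × V //
        (Nonempty (zmodPerp p.1 ≃ₗ[ZMod m] zmodPerp W) ∧ p.2 ∈ zmodPerp p.1)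
          ∧ addOrderOf p.2 = T}
      ≃ {N : Submodule (ZMod m) V // Nonempty (zmodPerp N ≃ₗ[ZMod m] zmodPerp W)}
        × {ξ : V // ξ ∈ zmodPerp W ∧ addOrderOf ξ = T} :=
    { toFun := fun p =>
        (⟨p.1.1, p.2.1.1⟩,
          ⟨((φ ⟨p.1.1, p.2.1.1⟩) ⟨p.1.2, p.2.1.2⟩ : zmodPerp W),
            ((φ ⟨p.1.1, p.2.1.1⟩) ⟨p.1.2, p.2.1.2⟩).2, by
              have h1 := addOrderOf_coe_submodule ((φ ⟨p.1.1, p.2.1.1⟩) ⟨p.1.2, p.2.1.2⟩)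
              have h2 : addOrderOf ((φ ⟨p.1.1, p.2.1.1⟩) (⟨p.1.2, p.2.1.2⟩ : zmodPerp p.1.1))
                  = addOrderOf (⟨p.1.2, p.2.1.2⟩ : zmodPerp p.1.1) :=
                addOrderOf_equiv_apply (φ ⟨p.1.1, p.2.1.1⟩).toAddEquiv _
              have h3 := addOrderOf_coe_submodule (⟨p.1.2, p.2.1.2⟩ : zmodPerp p.1.1)
              exact h1.trans (h2.trans (h3.symm.trans p.2.2))⟩)
      invFun := fun q =>
        ⟨(q.1.1, (((φ q.1).symm ⟨q.2.1, q.2.2.1⟩ : zmodPerp q.1.1) : V)),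
          ⟨⟨q.1.2, ((φ q.1).symm ⟨q.2.1, q.2.2.1⟩).2⟩, by
            have h1 := addOrderOf_coe_submodule ((φ q.1).symm ⟨q.2.1, q.2.2.1⟩)
            have h2 : addOrderOf ((φ q.1).symm (⟨q.2.1, q.2.2.1⟩ : zmodPerp W))
                = addOrderOf (⟨q.2.1, q.2.2.1⟩ : zmodPerp W) :=
              addOrderOf_equiv_apply (φ q.1).symm.toAddEquiv _
            have h3 := addOrderOf_coe_submodule (⟨q.2.1, q.2.2.1⟩ : zmodPerp W)
            exact h1.trans (h2.trans (h3.symm.trans q.2.2.2))⟩⟩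
      left_inv := by
        rintro ⟨⟨N, ξ⟩, ⟨hcond, hmem⟩, hord⟩
        apply Subtype.ext
        apply Prod.ext
        · rfl
        · exact congrArg Subtype.val ((φ ⟨N, hcond⟩).symm_apply_apply ⟨ξ, hmem⟩)
      right_inv := by
        rintro ⟨N, ξ, hmem, hord⟩
        have hx : (φ N) ((φ N).symm ⟨ξ, hmem⟩) = ⟨ξ, hmem⟩ :=
          (φ N).apply_symm_apply ⟨ξ, hmem⟩
        have hv : (((φ N) ((φ N).symm ⟨ξ, hmem⟩) : zmodPerp W) : V) = ξ :=
          congrArg Subtype.val hx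
        exact Prod.ext rfl (Subtype.ext hv) }
  have E2 : {p : Submodule (ZMod m) V × V //
        (Nonempty (zmodPerp p.1 ≃ₗ[ZMod m] zmodPerp W) ∧ p.2 ∈ zmodPerp p.1)
          ∧ addOrderOf p.2 = T}
      ≃ {ξ : V // addOrderOf ξ = T}
        × {N : Submodule (ZMod m) V //
            Nonempty (zmodPerp N ≃ₗ[ZMod m] zmodPerp W) ∧ ζ ∈ zmodPerp N} :=
    { toFun := fun p =>
        (⟨p.1.2, p.2.2⟩,
          ⟨Submodule.comap (adjE (E ⟨p.1.2, p.2.2⟩).symm).toLinearMap p.1.1,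
            cond_comap _ _ _ p.2.1.1, by
              have hz : (E ⟨p.1.2, p.2.2⟩).symm p.1.2 = ζ :=
                (LinearEquiv.symm_apply_eq _).mpr (hE ⟨p.1.2, p.2.2⟩).symm
              have hm := (mem_perp_comap (E ⟨p.1.2, p.2.2⟩).symm p.1.1 p.1.2).mpr p.2.1.2
              rwa [hz] at hm⟩)
      invFun := fun q =>
        ⟨(Submodule.comap (adjE (E q.1)).toLinearMap q.2.1, q.1.1),
          ⟨⟨cond_comap _ _ _ q.2.2.1, by
            have hm := (mem_perp_comap (E q.1) q.2.1 ζ).mpr q.2.2.2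
            rwa [hE q.1] at hm⟩, q.1.2⟩⟩
      left_inv := by
        rintro ⟨⟨N, ξ⟩, ⟨hcond, hmem⟩, hord⟩
        apply Subtype.ext
        apply Prod.ext
        · show Submodule.comap (adjE (E ⟨ξ, hord⟩)).toLinearMap
            (Submodule.comap (adjE (E ⟨ξ, hord⟩).symm).toLinearMap N) = N
          exact comap_adjE_left _ _
        · rfl
      right_inv := by
        rintro ⟨ξ, N, hcond, hmem⟩
        apply Prod.ext
        · rfl
        · apply Subtype.ext
          show Submodule.comap (adjE (E ξ).symm).toLinearMap
            (Submodule.comap (adjE (E ξ)).toLinearMap N) = N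
          exact comap_adjE_right _ _ }
  have c1 := (Nat.card_congr E1).symm.trans (Nat.card_congr E2)
  rw [Nat.card_prod, Nat.card_prod] at c1
  rw [mul_comm]
  exact c1.symm

lemma part2 (W : Submodule (ZMod m) V) :
    Nat.card {N : Submodule (ZMod m) V // Nonempty (zmodPerp N ≃ₗ[ZMod m] zmodPerp W)}
        * Nat.card ((zmodPerp W) ≃ₗ[ZMod m] (zmodPerp W))
      ≤ Nat.card (zmodPerp W) ^ n := by
  classical
  have φ : ∀ N : {N : Submodule (ZMod m) V // Nonempty (zmodPerp N ≃ₗ[ZMod m] zmodPerp W)},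
      zmodPerp W ≃ₗ[ZMod m] zmodPerp N.1 := fun N => (Classical.choice N.2).symm
  set F : {N : Submodule (ZMod m) V // Nonempty (zmodPerp N ≃ₗ[ZMod m] zmodPerp W)}
      × ((zmodPerp W) ≃ₗ[ZMod m] (zmodPerp W)) → (zmodPerp W →ₗ[ZMod m] V) :=
    fun p => (zmodPerp p.1.1).subtype ∘ₗ ((φ p.1).toLinearMap ∘ₗ p.2.toLinearMap) with hF
  have hrange : ∀ p, LinearMap.range (F p) = zmodPerp p.1.1 := by
    intro p
    rw [hF]
    simp only [LinearMap.range_comp]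
    have hsur : LinearMap.range ((φ p.1).toLinearMap ∘ₗ p.2.toLinearMap) = ⊤ := by
      rw [LinearMap.range_eq_top]
      exact (φ p.1).surjective.comp p.2.surjective
    rw [← LinearMap.range_comp, hsur, Submodule.map_top, Submodule.range_subtype]
  have hinj : Function.Injective F := by
    rintro ⟨N₁, α₁⟩ ⟨N₂, α₂⟩ h
    have hN : N₁ = N₂ := by
      apply Subtype.ext
      apply zmodPerp_injective
      rw [← hrange (N₁, α₁), ← hrange (N₂, α₂), h]
    subst hN
    have hα : α₁ = α₂ := by
      apply DFunLike.ext
      intro x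
      apply (φ N₁).injective
      apply Subtype.val_injective
      exact DFunLike.congr_fun h x
    rw [hα]
  haveI : Finite (zmodPerp W →ₗ[ZMod m] V) :=
    Finite.of_injective (fun f : zmodPerp W →ₗ[ZMod m] V => (f : zmodPerp W → V))
      DFunLike.coe_injective
  have hcard1 : Nat.card ({N : Submodule (ZMod m) V //
        Nonempty (zmodPerp N ≃ₗ[ZMod m] zmodPerp W)}
      × ((zmodPerp W) ≃ₗ[ZMod m] (zmodPerp W))) ≤ Nat.card (zmodPerp W →ₗ[ZMod m] V) :=
    Nat.card_le_card_of_injective F hinj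
  rw [Nat.card_prod] at hcard1
  refine le_trans hcard1 ?_
  have piE : (zmodPerp W →ₗ[ZMod m] V) ≃ (Fin n → (zmodPerp W →ₗ[ZMod m] ZMod m)) :=
    { toFun := fun f i => (LinearMap.proj i) ∘ₗ f
      invFun := fun g => LinearMap.pi g
      left_inv := fun f => by ext x; simp [LinearMap.pi_apply]
      right_inv := fun g => by funext i; ext x; simp [LinearMap.pi_apply] }
  rw [Nat.card_congr piE, Nat.card_pi]
  calc ∏ _i : Fin n, Nat.card (zmodPerp W →ₗ[ZMod m] ZMod m)
      ≤ ∏ _i : Fin n, Nat.card (zmodPerp W) :=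
        Finset.prod_le_prod (fun _ _ => Nat.zero_le _) (fun _ _ => card_linearMap_le _)
    _ = Nat.card (zmodPerp W) ^ n := by
        rw [Finset.prod_const, Finset.card_univ, Fintype.card_fin]

end Assembly

end Stmt17


/-- Counting submodules `N ≤ (ℤ/mℤ)^n` with `N^⊥ ≅ W^⊥` containing a fixed dual vector
`ζ` of order `T`: the count equals
`#{N : N^⊥ ≅ W^⊥} · #{ξ ∈ W^⊥ : ord ξ = T} / #{ξ : ord ξ = T}`, and is at most
`(|W^⊥|^n / (|Aut W^⊥| · #{ξ : ord ξ = T})) · #{ξ ∈ W^⊥ : ord ξ = T}`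
(both statements in multiplied-out form). -/
theorem stmt_17 (m n T : ℕ) [NeZero m]
    (W : Submodule (ZMod m) (Fin n → ZMod m))
    (ζ : Fin n → ZMod m) (hζ : addOrderOf ζ = T) :
    (Nat.card {N : Submodule (ZMod m) (Fin n → ZMod m) //
          Nonempty (zmodPerp N ≃ₗ[ZMod m] zmodPerp W) ∧ ζ ∈ zmodPerp N}
        * Nat.card {ξ : Fin n → ZMod m // addOrderOf ξ = T}
      = Nat.card {N : Submodule (ZMod m) (Fin n → ZMod m) //
            Nonempty (zmodPerp N ≃ₗ[ZMod m] zmodPerp W)}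
          * Nat.card {ξ : Fin n → ZMod m // ξ ∈ zmodPerp W ∧ addOrderOf ξ = T}) ∧
    ((Nat.card {N : Submodule (ZMod m) (Fin n → ZMod m) //
          Nonempty (zmodPerp N ≃ₗ[ZMod m] zmodPerp W) ∧ ζ ∈ zmodPerp N} : ℝ)
        * (Nat.card ((zmodPerp W) ≃ₗ[ZMod m] (zmodPerp W)) : ℝ)
        * (Nat.card {ξ : Fin n → ZMod m // addOrderOf ξ = T} : ℝ)
      ≤ (Nat.card (zmodPerp W) : ℝ) ^ n
          * (Nat.card {ξ : Fin n → ZMod m // ξ ∈ zmodPerp W ∧ addOrderOf ξ = T} : ℝ)) := by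
  have h1 := Stmt17.part1 T W ζ hζ
  have h2 := Stmt17.part2 (n := n) W
  refine ⟨h1, ?_⟩
  have hnat : Nat.card {N : Submodule (ZMod m) (Fin n → ZMod m) //
          Nonempty (zmodPerp N ≃ₗ[ZMod m] zmodPerp W) ∧ ζ ∈ zmodPerp N}
        * Nat.card ((zmodPerp W) ≃ₗ[ZMod m] (zmodPerp W))
        * Nat.card {ξ : Fin n → ZMod m // addOrderOf ξ = T}
      ≤ Nat.card (zmodPerp W) ^ n
        * Nat.card {ξ : Fin n → ZMod m // ξ ∈ zmodPerp W ∧ addOrderOf ξ = T} := by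
    calc Nat.card {N : Submodule (ZMod m) (Fin n → ZMod m) //
          Nonempty (zmodPerp N ≃ₗ[ZMod m] zmodPerp W) ∧ ζ ∈ zmodPerp N}
        * Nat.card ((zmodPerp W) ≃ₗ[ZMod m] (zmodPerp W))
        * Nat.card {ξ : Fin n → ZMod m // addOrderOf ξ = T}
        = (Nat.card {N : Submodule (ZMod m) (Fin n → ZMod m) //
              Nonempty (zmodPerp N ≃ₗ[ZMod m] zmodPerp W) ∧ ζ ∈ zmodPerp N}
            * Nat.card {ξ : Fin n → ZMod m // addOrderOf ξ = T})
          * Nat.card ((zmodPerp W) ≃ₗ[ZMod m] (zmodPerp W)) := by ring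
      _ = (Nat.card {N : Submodule (ZMod m) (Fin n → ZMod m) //
              Nonempty (zmodPerp N ≃ₗ[ZMod m] zmodPerp W)}
            * Nat.card ((zmodPerp W) ≃ₗ[ZMod m] (zmodPerp W)))
          * Nat.card {ξ : Fin n → ZMod m // ξ ∈ zmodPerp W ∧ addOrderOf ξ = T} := by
          rw [h1]; ring
      _ ≤ Nat.card (zmodPerp W) ^ n
          * Nat.card {ξ : Fin n → ZMod m // ξ ∈ zmodPerp W ∧ addOrderOf ξ = T} :=
          Nat.mul_le_mul_right _ h2
  exact_mod_cast hnat
end
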